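/- arXiv:1509.03618 — 2 statements merged into one kernel-verified Lean document; each statement's English description precedes it below -/
import Mathlib

section
/- For every ring R, every natural number n ≥ 3, and every nontrivial commutative ring C, there is no morphism of partial rings from the matrix ring Mₙ(R) = Matrix (Fin n) (Fin n) R to C. -/
def IsPartialRingHom {R C : Type*} [Ring R] [CommRing C] (f : R → C) : Prop :=
  f 0 = 0 ∧ f 1 = 1 ∧
    ∀ x y : R, x * y = y * x → f (x + y) = f x + f y ∧ f (x * y) = f x * f y

private abbrev M3 := Matrix (Fin 3) (Fin 3) ℤ

private theorem idem01 {F : Type*} [CommRing F] [IsDomain F] {x : F} (h : x * x = x) :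
    x = 0 ∨ x = 1 := by
  have h2 : x * (x - 1) = 0 := by linear_combination h
  rcases mul_eq_zero.mp h2 with h3 | h3
  · exact Or.inl h3
  · exact Or.inr (by linear_combination h3)

private def W0 : M3 := !![-1, -1, -1; 1, 1, 1; 1, 1, 1]
private def W1 : M3 := !![0, -1, -1; 0, 0, 0; 0, 1, 1]
private def W2 : M3 := !![0, -1, 0; 0, 1, 0; 0, -1, 0]
private def W3 : M3 := !![0, -1, 0; 0, 1, 0; 0, 0, 0]
private def W4 : M3 := !![0, -1, 0; 0, 1, 0; 0, 1, 0]
private def W5 : M3 := !![0, -1, 1; 0, 1, -1; 0, 0, 0]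
private def W6 : M3 := !![0, 0, -1; 0, 0, -1; 0, 0, 1]
private def W7 : M3 := !![0, 0, -1; 0, 0, 0; 0, 0, 1]
private def W8 : M3 := !![0, 0, -1; 0, 0, 1; 0, 0, 1]
private def W9 : M3 := !![0, 0, -1; 0, 1, 0; 0, 0, 1]
private def W10 : M3 := !![0, 0, -1; 1, 1, 1; 0, 0, 1]
private def W11 : M3 := !![0, 0, 0; -1, 0, -1; 1, 0, 1]
private def W12 : M3 := !![0, 1, 0; 0, 1, 0; 0, -1, 0]
private def W13 : M3 := !![0, 1, 0; 0, 1, 0; 0, 0, 1]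
private def W14 : M3 := !![0, 1, 1; 0, 1, 1; 0, 0, 0]
private def W15 : M3 := !![1, 0, 0; -1, 0, -1; 0, 0, 1]
private def W16 : M3 := !![1, 0, 0; -1, 0, 0; -1, 0, 0]
private def W17 : M3 := !![1, 0, 0; -1, 0, 0; 0, 0, 0]
private def W18 : M3 := !![1, 0, 0; -1, 0, 0; 0, 0, 1]
private def W19 : M3 := !![1, 0, 0; 0, 0, -1; 0, 0, 1]
private def W20 : M3 := !![1, 0, 0; 0, 0, 0; -1, 0, 0]
private def W21 : M3 := !![1, 0, 0; 0, 0, 0; 0, 0, 0]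
private def W22 : M3 := !![1, 0, 0; 0, 0, 0; 0, 0, 1]
private def W23 : M3 := !![1, 0, 0; 0, 0, 0; 0, 1, 1]
private def W24 : M3 := !![1, 0, 0; 0, 0, 0; 1, 0, 0]
private def W25 : M3 := !![1, 0, 0; 0, 0, 1; 0, 0, 1]
private def W26 : M3 := !![1, 0, 0; 0, 1, -1; 0, 0, 0]
private def W27 : M3 := !![1, 0, 0; 0, 1, 0; -1, -1, 0]
private def W28 : M3 := !![1, 0, 0; 0, 1, 0; -1, 0, 0]
private def W29 : M3 := !![1, 0, 0; 0, 1, 0; 0, -1, 0]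
private def W30 : M3 := !![1, 0, 0; 0, 1, 0; 0, 0, 0]
private def W31 : M3 := !![1, 0, 0; 0, 1, 0; 0, 0, 1]
private def W32 : M3 := !![1, 0, 0; 0, 1, 0; 0, 1, 0]
private def W33 : M3 := !![1, 0, 0; 0, 1, 0; 1, -1, 0]
private def W34 : M3 := !![1, 0, 0; 0, 1, 0; 1, 0, 0]
private def W35 : M3 := !![1, 0, 0; 1, 0, 0; -1, 0, 0]
private def W36 : M3 := !![1, 0, 0; 1, 0, 0; -1, 1, 1]
private def W37 : M3 := !![1, 0, 0; 1, 0, 0; 0, 0, 0]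
private def W38 : M3 := !![1, 0, 0; 1, 0, 0; 0, 0, 1]
private def W39 : M3 := !![1, 0, 0; 1, 0, 1; 0, 0, 1]
private def W40 : M3 := !![1, 0, 0; 1, 1, 1; -1, 0, 0]
private def W41 : M3 := !![1, 0, 1; -1, 0, -1; 0, 0, 0]
private def W42 : M3 := !![1, 0, 1; 0, 0, 0; 0, 0, 0]
private def W43 : M3 := !![1, 0, 1; 0, 1, -1; 0, 0, 0]
private def W44 : M3 := !![1, 0, 1; 1, 0, 1; 0, 0, 0]
private def W45 : M3 := !![1, 1, -1; 0, 0, 0; 0, 0, 0]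
private def W46 : M3 := !![1, 1, 0; 0, 0, 0; -1, -1, 0]
private def W47 : M3 := !![1, 1, 0; 0, 0, 0; 0, 0, 0]
private def W48 : M3 := !![1, 1, 0; 0, 0, 0; 0, 0, 1]
private def W49 : M3 := !![1, 1, 0; 0, 0, 0; 0, 1, 1]
private def W50 : M3 := !![1, 1, 0; 0, 0, 0; 1, 1, 0]
private def W51 : M3 := !![1, 1, 1; 0, 0, 0; 0, 0, 0]
private def W52 : M3 := !![1, 1, 1; 1, 1, 1; -1, -1, -1]

private theorem core_refutation {F : Type*} [CommRing F] [IsDomain F] (v : M3 → F)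
    (hv0 : v 0 = 0) (hv1 : v 1 = 1)
    (hv : ∀ A B : M3, A * B = B * A → v (A + B) = v A + v B ∧ v (A * B) = v A * v B) :
    False := by
  have d0 : v W0 = 0 ∨ v W0 = 1 := by
    have t := (hv W0 W0 rfl).2
    rw [show W0 * W0 = W0 from by decide] at t
    exact idem01 t.symm
  have d1 : v W1 = 0 ∨ v W1 = 1 := by
    have t := (hv W1 W1 rfl).2
    rw [show W1 * W1 = W1 from by decide] at t
    exact idem01 t.symm
  have d2 : v W2 = 0 ∨ v W2 = 1 := by
    have t := (hv W2 W2 rfl).2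
    rw [show W2 * W2 = W2 from by decide] at t
    exact idem01 t.symm
  have d3 : v W3 = 0 ∨ v W3 = 1 := by
    have t := (hv W3 W3 rfl).2
    rw [show W3 * W3 = W3 from by decide] at t
    exact idem01 t.symm
  have d4 : v W4 = 0 ∨ v W4 = 1 := by
    have t := (hv W4 W4 rfl).2
    rw [show W4 * W4 = W4 from by decide] at t
    exact idem01 t.symm
  have d5 : v W5 = 0 ∨ v W5 = 1 := by
    have t := (hv W5 W5 rfl).2
    rw [show W5 * W5 = W5 from by decide] at t
    exact idem01 t.symm
  have d6 : v W6 = 0 ∨ v W6 = 1 := by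
    have t := (hv W6 W6 rfl).2
    rw [show W6 * W6 = W6 from by decide] at t
    exact idem01 t.symm
  have d7 : v W7 = 0 ∨ v W7 = 1 := by
    have t := (hv W7 W7 rfl).2
    rw [show W7 * W7 = W7 from by decide] at t
    exact idem01 t.symm
  have d8 : v W8 = 0 ∨ v W8 = 1 := by
    have t := (hv W8 W8 rfl).2
    rw [show W8 * W8 = W8 from by decide] at t
    exact idem01 t.symm
  have d9 : v W9 = 0 ∨ v W9 = 1 := by
    have t := (hv W9 W9 rfl).2
    rw [show W9 * W9 = W9 from by decide] at t
    exact idem01 t.symm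
  have d10 : v W10 = 0 ∨ v W10 = 1 := by
    have t := (hv W10 W10 rfl).2
    rw [show W10 * W10 = W10 from by decide] at t
    exact idem01 t.symm
  have d11 : v W11 = 0 ∨ v W11 = 1 := by
    have t := (hv W11 W11 rfl).2
    rw [show W11 * W11 = W11 from by decide] at t
    exact idem01 t.symm
  have d12 : v W12 = 0 ∨ v W12 = 1 := by
    have t := (hv W12 W12 rfl).2
    rw [show W12 * W12 = W12 from by decide] at t
    exact idem01 t.symm
  have d13 : v W13 = 0 ∨ v W13 = 1 := by
    have t := (hv W13 W13 rfl).2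
    rw [show W13 * W13 = W13 from by decide] at t
    exact idem01 t.symm
  have d14 : v W14 = 0 ∨ v W14 = 1 := by
    have t := (hv W14 W14 rfl).2
    rw [show W14 * W14 = W14 from by decide] at t
    exact idem01 t.symm
  have d15 : v W15 = 0 ∨ v W15 = 1 := by
    have t := (hv W15 W15 rfl).2
    rw [show W15 * W15 = W15 from by decide] at t
    exact idem01 t.symm
  have d16 : v W16 = 0 ∨ v W16 = 1 := by
    have t := (hv W16 W16 rfl).2
    rw [show W16 * W16 = W16 from by decide] at t
    exact idem01 t.symm
  have d17 : v W17 = 0 ∨ v W17 = 1 := by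
    have t := (hv W17 W17 rfl).2
    rw [show W17 * W17 = W17 from by decide] at t
    exact idem01 t.symm
  have d18 : v W18 = 0 ∨ v W18 = 1 := by
    have t := (hv W18 W18 rfl).2
    rw [show W18 * W18 = W18 from by decide] at t
    exact idem01 t.symm
  have d19 : v W19 = 0 ∨ v W19 = 1 := by
    have t := (hv W19 W19 rfl).2
    rw [show W19 * W19 = W19 from by decide] at t
    exact idem01 t.symm
  have d20 : v W20 = 0 ∨ v W20 = 1 := by
    have t := (hv W20 W20 rfl).2
    rw [show W20 * W20 = W20 from by decide] at t
    exact idem01 t.symm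
  have d21 : v W21 = 0 ∨ v W21 = 1 := by
    have t := (hv W21 W21 rfl).2
    rw [show W21 * W21 = W21 from by decide] at t
    exact idem01 t.symm
  have d22 : v W22 = 0 ∨ v W22 = 1 := by
    have t := (hv W22 W22 rfl).2
    rw [show W22 * W22 = W22 from by decide] at t
    exact idem01 t.symm
  have d23 : v W23 = 0 ∨ v W23 = 1 := by
    have t := (hv W23 W23 rfl).2
    rw [show W23 * W23 = W23 from by decide] at t
    exact idem01 t.symm
  have d24 : v W24 = 0 ∨ v W24 = 1 := by
    have t := (hv W24 W24 rfl).2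
    rw [show W24 * W24 = W24 from by decide] at t
    exact idem01 t.symm
  have d25 : v W25 = 0 ∨ v W25 = 1 := by
    have t := (hv W25 W25 rfl).2
    rw [show W25 * W25 = W25 from by decide] at t
    exact idem01 t.symm
  have d26 : v W26 = 0 ∨ v W26 = 1 := by
    have t := (hv W26 W26 rfl).2
    rw [show W26 * W26 = W26 from by decide] at t
    exact idem01 t.symm
  have d27 : v W27 = 0 ∨ v W27 = 1 := by
    have t := (hv W27 W27 rfl).2
    rw [show W27 * W27 = W27 from by decide] at t
    exact idem01 t.symm
  have d28 : v W28 = 0 ∨ v W28 = 1 := by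
    have t := (hv W28 W28 rfl).2
    rw [show W28 * W28 = W28 from by decide] at t
    exact idem01 t.symm
  have d29 : v W29 = 0 ∨ v W29 = 1 := by
    have t := (hv W29 W29 rfl).2
    rw [show W29 * W29 = W29 from by decide] at t
    exact idem01 t.symm
  have d30 : v W30 = 0 ∨ v W30 = 1 := by
    have t := (hv W30 W30 rfl).2
    rw [show W30 * W30 = W30 from by decide] at t
    exact idem01 t.symm
  have d31 : v W31 = 0 ∨ v W31 = 1 := by
    have t := (hv W31 W31 rfl).2
    rw [show W31 * W31 = W31 from by decide] at t
    exact idem01 t.symm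
  have d32 : v W32 = 0 ∨ v W32 = 1 := by
    have t := (hv W32 W32 rfl).2
    rw [show W32 * W32 = W32 from by decide] at t
    exact idem01 t.symm
  have d33 : v W33 = 0 ∨ v W33 = 1 := by
    have t := (hv W33 W33 rfl).2
    rw [show W33 * W33 = W33 from by decide] at t
    exact idem01 t.symm
  have d34 : v W34 = 0 ∨ v W34 = 1 := by
    have t := (hv W34 W34 rfl).2
    rw [show W34 * W34 = W34 from by decide] at t
    exact idem01 t.symm
  have d35 : v W35 = 0 ∨ v W35 = 1 := by
    have t := (hv W35 W35 rfl).2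
    rw [show W35 * W35 = W35 from by decide] at t
    exact idem01 t.symm
  have d36 : v W36 = 0 ∨ v W36 = 1 := by
    have t := (hv W36 W36 rfl).2
    rw [show W36 * W36 = W36 from by decide] at t
    exact idem01 t.symm
  have d37 : v W37 = 0 ∨ v W37 = 1 := by
    have t := (hv W37 W37 rfl).2
    rw [show W37 * W37 = W37 from by decide] at t
    exact idem01 t.symm
  have d38 : v W38 = 0 ∨ v W38 = 1 := by
    have t := (hv W38 W38 rfl).2
    rw [show W38 * W38 = W38 from by decide] at t
    exact idem01 t.symm
  have d39 : v W39 = 0 ∨ v W39 = 1 := by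
    have t := (hv W39 W39 rfl).2
    rw [show W39 * W39 = W39 from by decide] at t
    exact idem01 t.symm
  have d40 : v W40 = 0 ∨ v W40 = 1 := by
    have t := (hv W40 W40 rfl).2
    rw [show W40 * W40 = W40 from by decide] at t
    exact idem01 t.symm
  have d41 : v W41 = 0 ∨ v W41 = 1 := by
    have t := (hv W41 W41 rfl).2
    rw [show W41 * W41 = W41 from by decide] at t
    exact idem01 t.symm
  have d42 : v W42 = 0 ∨ v W42 = 1 := by
    have t := (hv W42 W42 rfl).2
    rw [show W42 * W42 = W42 from by decide] at t
    exact idem01 t.symm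
  have d43 : v W43 = 0 ∨ v W43 = 1 := by
    have t := (hv W43 W43 rfl).2
    rw [show W43 * W43 = W43 from by decide] at t
    exact idem01 t.symm
  have d44 : v W44 = 0 ∨ v W44 = 1 := by
    have t := (hv W44 W44 rfl).2
    rw [show W44 * W44 = W44 from by decide] at t
    exact idem01 t.symm
  have d45 : v W45 = 0 ∨ v W45 = 1 := by
    have t := (hv W45 W45 rfl).2
    rw [show W45 * W45 = W45 from by decide] at t
    exact idem01 t.symm
  have d46 : v W46 = 0 ∨ v W46 = 1 := by
    have t := (hv W46 W46 rfl).2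
    rw [show W46 * W46 = W46 from by decide] at t
    exact idem01 t.symm
  have d47 : v W47 = 0 ∨ v W47 = 1 := by
    have t := (hv W47 W47 rfl).2
    rw [show W47 * W47 = W47 from by decide] at t
    exact idem01 t.symm
  have d48 : v W48 = 0 ∨ v W48 = 1 := by
    have t := (hv W48 W48 rfl).2
    rw [show W48 * W48 = W48 from by decide] at t
    exact idem01 t.symm
  have d49 : v W49 = 0 ∨ v W49 = 1 := by
    have t := (hv W49 W49 rfl).2
    rw [show W49 * W49 = W49 from by decide] at t
    exact idem01 t.symm
  have d50 : v W50 = 0 ∨ v W50 = 1 := by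
    have t := (hv W50 W50 rfl).2
    rw [show W50 * W50 = W50 from by decide] at t
    exact idem01 t.symm
  have d51 : v W51 = 0 ∨ v W51 = 1 := by
    have t := (hv W51 W51 rfl).2
    rw [show W51 * W51 = W51 from by decide] at t
    exact idem01 t.symm
  have d52 : v W52 = 0 ∨ v W52 = 1 := by
    have t := (hv W52 W52 rfl).2
    rw [show W52 * W52 = W52 from by decide] at t
    exact idem01 t.symm
  have ep79_134_79 : v W14 = v W14 * v W36 := by
    have t := (hv W14 W36 (by decide)).2
    rw [show W14 * W36 = W14 from by decide] at t
    exact t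
  have ep74_124_72 : v W12 = v W13 * v W29 := by
    have t := (hv W13 W29 (by decide)).2
    rw [show W13 * W29 = W12 from by decide] at t
    exact t
  have ep122_136_133 : v W35 = v W28 * v W38 := by
    have t := (hv W28 W38 (by decide)).2
    rw [show W28 * W38 = W35 from by decide] at t
    exact t
  have ep119_120_115 : v W21 = v W25 * v W26 := by
    have t := (hv W25 W26 (by decide)).2
    rw [show W25 * W26 = W21 from by decide] at t
    exact t
  have ep116_125_115 : v W21 = v W22 * v W30 := by
    have t := (hv W22 W30 (by decide)).2
    rw [show W22 * W30 = W21 from by decide] at t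
    exact t
  have ep106_125_105 : v W17 = v W18 * v W30 := by
    have t := (hv W18 W30 (by decide)).2
    rw [show W18 * W30 = W17 from by decide] at t
    exact t
  have ep116_122_113 : v W20 = v W22 * v W28 := by
    have t := (hv W22 W28 (by decide)).2
    rw [show W22 * W28 = W20 from by decide] at t
    exact t
  have ep117_128_118 : v W24 = v W23 * v W33 := by
    have t := (hv W23 W33 (by decide)).2
    rw [show W23 * W33 = W24 from by decide] at t
    exact t
  have ep124_134_133 : v W35 = v W29 * v W36 := by
    have t := (hv W29 W36 (by decide)).2
    rw [show W29 * W36 = W35 from by decide] at t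
    exact t
  have ep117_124_115 : v W21 = v W23 * v W29 := by
    have t := (hv W23 W29 (by decide)).2
    rw [show W23 * W29 = W21 from by decide] at t
    exact t
  have ep117_121_113 : v W20 = v W23 * v W27 := by
    have t := (hv W23 W27 (by decide)).2
    rw [show W23 * W27 = W20 from by decide] at t
    exact t
  have ep106_122_104 : v W16 = v W18 * v W28 := by
    have t := (hv W18 W28 (by decide)).2
    rw [show W18 * W28 = W16 from by decide] at t
    exact t
  have ep125_136_135 : v W37 = v W30 * v W38 := by
    have t := (hv W30 W38 (by decide)).2
    rw [show W30 * W38 = W37 from by decide] at t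
    exact t
  have ep105_121_105 : v W17 = v W17 * v W27 := by
    have t := (hv W17 W27 (by decide)).2
    rw [show W17 * W27 = W17 from by decide] at t
    exact t
  have ep116_129_118 : v W24 = v W22 * v W34 := by
    have t := (hv W22 W34 (by decide)).2
    rw [show W22 * W34 = W24 from by decide] at t
    exact t
  have ep120_139_135 : v W37 = v W26 * v W39 := by
    have t := (hv W26 W39 (by decide)).2
    rw [show W26 * W39 = W37 from by decide] at t
    exact t
  have ep124_157_155 : v W47 = v W29 * v W49 := by
    have t := (hv W29 W49 (by decide)).2
    rw [show W29 * W49 = W47 from by decide] at t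
    exact t
  have ep104_127_104 : v W16 = v W16 * v W32 := by
    have t := (hv W16 W32 (by decide)).2
    rw [show W16 * W32 = W16 from by decide] at t
    exact t
  have es11_153_122 : v W28 = v W4 + v W46 := by
    have t := (hv W4 W46 (by decide)).1
    rw [show W4 + W46 = W28 from by decide] at t
    exact t
  have os11_153_122 : v W4 * v W46 = 0 := by
    have t := (hv W4 W46 (by decide)).2
    rw [show W4 * W46 = (0:M3) from by decide, hv0] at t
    exact t.symm
  have es18_143_116 : v W22 = v W7 + v W42 := by
    have t := (hv W7 W42 (by decide)).1
    rw [show W7 + W42 = W22 from by decide] at t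
    exact t
  have os18_143_116 : v W7 * v W42 = 0 := by
    have t := (hv W7 W42 (by decide)).2
    rw [show W7 * W42 = (0:M3) from by decide, hv0] at t
    exact t.symm
  have es8_158_129 : v W34 = v W2 + v W50 := by
    have t := (hv W2 W50 (by decide)).1
    rw [show W2 + W50 = W34 from by decide] at t
    exact t
  have os8_158_129 : v W2 * v W50 = 0 := by
    have t := (hv W2 W50 (by decide)).2
    rw [show W2 * W50 = (0:M3) from by decide, hv0] at t
    exact t.symm
  have es18_161_156 : v W48 = v W7 + v W51 := by
    have t := (hv W7 W51 (by decide)).1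
    rw [show W7 + W51 = W48 from by decide] at t
    exact t
  have os18_161_156 : v W7 * v W51 = 0 := by
    have t := (hv W7 W51 (by decide)).2
    rw [show W7 * W51 = (0:M3) from by decide, hv0] at t
    exact t.symm
  have es22_133_112 : v W19 = v W11 + v W35 := by
    have t := (hv W11 W35 (by decide)).1
    rw [show W11 + W35 = W19 from by decide] at t
    exact t
  have os22_133_112 : v W11 * v W35 = 0 := by
    have t := (hv W11 W35 (by decide)).2
    rw [show W11 * W35 = (0:M3) from by decide, hv0] at t
    exact t.symm
  have es21_142_126 : v W31 = v W10 + v W41 := by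
    have t := (hv W10 W41 (by decide)).1
    rw [show W10 + W41 = W31 from by decide] at t
    exact t
  have os21_142_126 : v W10 * v W41 = 0 := by
    have t := (hv W10 W41 (by decide)).2
    rw [show W10 * W41 = (0:M3) from by decide, hv0] at t
    exact t.symm
  have es18_142_102 : v W15 = v W7 + v W41 := by
    have t := (hv W7 W41 (by decide)).1
    rw [show W7 + W41 = W15 from by decide] at t
    exact t
  have os18_142_102 : v W7 * v W41 = 0 := by
    have t := (hv W7 W41 (by decide)).2
    rw [show W7 * W41 = (0:M3) from by decide, hv0] at t
    exact t.symm
  have es4_163_141 : v W40 = v W1 + v W52 := by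
    have t := (hv W1 W52 (by decide)).1
    rw [show W1 + W52 = W40 from by decide] at t
    exact t
  have os4_163_141 : v W1 * v W52 = 0 := by
    have t := (hv W1 W52 (by decide)).2
    rw [show W1 * W52 = (0:M3) from by decide, hv0] at t
    exact t.symm
  have es4_161_117 : v W23 = v W1 + v W51 := by
    have t := (hv W1 W51 (by decide)).1
    rw [show W1 + W51 = W23 from by decide] at t
    exact t
  have os4_161_117 : v W1 * v W51 = 0 := by
    have t := (hv W1 W51 (by decide)).2
    rw [show W1 * W51 = (0:M3) from by decide, hv0] at t
    exact t.symm
  have es22_113_102 : v W15 = v W11 + v W20 := by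
    have t := (hv W11 W20 (by decide)).1
    rw [show W11 + W20 = W15 from by decide] at t
    exact t
  have os22_113_102 : v W11 * v W20 = 0 := by
    have t := (hv W11 W20 (by decide)).2
    rw [show W11 * W20 = (0:M3) from by decide, hv0] at t
    exact t.symm
  have es14_149_120 : v W26 = v W5 + v W45 := by
    have t := (hv W5 W45 (by decide)).1
    rw [show W5 + W45 = W26 from by decide] at t
    exact t
  have os14_149_120 : v W5 * v W45 = 0 := by
    have t := (hv W5 W45 (by decide)).2
    rw [show W5 * W45 = (0:M3) from by decide, hv0] at t
    exact t.symm
  have es11_155_127 : v W32 = v W4 + v W47 := by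
    have t := (hv W4 W47 (by decide)).1
    rw [show W4 + W47 = W32 from by decide] at t
    exact t
  have os11_155_127 : v W4 * v W47 = 0 := by
    have t := (hv W4 W47 (by decide)).2
    rw [show W4 * W47 = (0:M3) from by decide, hv0] at t
    exact t.symm
  have es18_147_139 : v W39 = v W7 + v W44 := by
    have t := (hv W7 W44 (by decide)).1
    rw [show W7 + W44 = W39 from by decide] at t
    exact t
  have os18_147_139 : v W7 * v W44 = 0 := by
    have t := (hv W7 W44 (by decide)).2
    rw [show W7 * W44 = (0:M3) from by decide, hv0] at t
    exact t.symm
  have es19_144_126 : v W31 = v W8 + v W43 := by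
    have t := (hv W8 W43 (by decide)).1
    rw [show W8 + W43 = W31 from by decide] at t
    exact t
  have os19_144_126 : v W8 * v W43 = 0 := by
    have t := (hv W8 W43 (by decide)).2
    rw [show W8 * W43 = (0:M3) from by decide, hv0] at t
    exact t.symm
  have es19_143_119 : v W25 = v W8 + v W42 := by
    have t := (hv W8 W42 (by decide)).1
    rw [show W8 + W42 = W25 from by decide] at t
    exact t
  have os19_143_119 : v W8 * v W42 = 0 := by
    have t := (hv W8 W42 (by decide)).2
    rw [show W8 * W42 = (0:M3) from by decide, hv0] at t
    exact t.symm
  have es19_142_106 : v W18 = v W8 + v W41 := by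
    have t := (hv W8 W41 (by decide)).1
    rw [show W8 + W41 = W18 from by decide] at t
    exact t
  have os19_142_106 : v W8 * v W41 = 0 := by
    have t := (hv W8 W41 (by decide)).2
    rw [show W8 * W41 = (0:M3) from by decide, hv0] at t
    exact t.symm
  have es22_141_126 : v W31 = v W11 + v W40 := by
    have t := (hv W11 W40 (by decide)).1
    rw [show W11 + W40 = W31 from by decide] at t
    exact t
  have os22_141_126 : v W11 * v W40 = 0 := by
    have t := (hv W11 W40 (by decide)).2
    rw [show W11 * W40 = (0:M3) from by decide, hv0] at t
    exact t.symm
  have es17_147_136 : v W38 = v W6 + v W44 := by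
    have t := (hv W6 W44 (by decide)).1
    rw [show W6 + W44 = W38 from by decide] at t
    exact t
  have os17_147_136 : v W6 * v W44 = 0 := by
    have t := (hv W6 W44 (by decide)).2
    rw [show W6 * W44 = (0:M3) from by decide, hv0] at t
    exact t.symm
  have es0_153_21 : v W10 = v W0 + v W46 := by
    have t := (hv W0 W46 (by decide)).1
    rw [show W0 + W46 = W10 from by decide] at t
    exact t
  have os0_153_21 : v W0 * v W46 = 0 := by
    have t := (hv W0 W46 (by decide)).2
    rw [show W0 * W46 = (0:M3) from by decide, hv0] at t
    exact t.symm
  have es20_143_126 : v W31 = v W9 + v W42 := by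
    have t := (hv W9 W42 (by decide)).1
    rw [show W9 + W42 = W31 from by decide] at t
    exact t
  have os20_143_126 : v W9 * v W42 = 0 := by
    have t := (hv W9 W42 (by decide)).2
    rw [show W9 * W42 = (0:M3) from by decide, hv0] at t
    exact t.symm
  have es8_157_126 : v W31 = v W2 + v W49 := by
    have t := (hv W2 W49 (by decide)).1
    rw [show W2 + W49 = W31 from by decide] at t
    exact t
  have os8_157_126 : v W2 * v W49 = 0 := by
    have t := (hv W2 W49 (by decide)).2
    rw [show W2 * W49 = (0:M3) from by decide, hv0] at t
    exact t.symm
  have es14_155_144 : v W43 = v W5 + v W47 := by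
    have t := (hv W5 W47 (by decide)).1
    rw [show W5 + W47 = W43 from by decide] at t
    exact t
  have os14_155_144 : v W5 * v W47 = 0 := by
    have t := (hv W5 W47 (by decide)).2
    rw [show W5 * W47 = (0:M3) from by decide, hv0] at t
    exact t.symm
  have es4_72_20 : v W9 = v W1 + v W12 := by
    have t := (hv W1 W12 (by decide)).1
    rw [show W1 + W12 = W9 from by decide] at t
    exact t
  have os4_72_20 : v W1 * v W12 = 0 := by
    have t := (hv W1 W12 (by decide)).2
    rw [show W1 * W12 = (0:M3) from by decide, hv0] at t
    exact t.symm
  have es9_155_125 : v W30 = v W3 + v W47 := by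
    have t := (hv W3 W47 (by decide)).1
    rw [show W3 + W47 = W30 from by decide] at t
    exact t
  have os9_155_125 : v W3 * v W47 = 0 := by
    have t := (hv W3 W47 (by decide)).2
    rw [show W3 * W47 = (0:M3) from by decide, hv0] at t
    exact t.symm
  have es17_79_74 : v W13 = v W6 + v W14 := by
    have t := (hv W6 W14 (by decide)).1
    rw [show W6 + W14 = W13 from by decide] at t
    exact t
  have os17_79_74 : v W6 * v W14 = 0 := by
    have t := (hv W6 W14 (by decide)).2
    rw [show W6 * W14 = (0:M3) from by decide, hv0] at t
    exact t.symm
  have es17_143_112 : v W19 = v W6 + v W42 := by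
    have t := (hv W6 W42 (by decide)).1
    rw [show W6 + W42 = W19 from by decide] at t
    exact t
  have os17_143_112 : v W6 * v W42 = 0 := by
    have t := (hv W6 W42 (by decide)).2
    rw [show W6 * W42 = (0:M3) from by decide, hv0] at t
    exact t.symm
  have es9_156_126 : v W31 = v W3 + v W48 := by
    have t := (hv W3 W48 (by decide)).1
    rw [show W3 + W48 = W31 from by decide] at t
    exact t
  have os9_156_126 : v W3 * v W48 = 0 := by
    have t := (hv W3 W48 (by decide)).2
    rw [show W3 * W48 = (0:M3) from by decide, hv0] at t
    exact t.symm
  have es9_153_121 : v W27 = v W3 + v W46 := by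
    have t := (hv W3 W46 (by decide)).1
    rw [show W3 + W46 = W27 from by decide] at t
    exact t
  have os9_153_121 : v W3 * v W46 = 0 := by
    have t := (hv W3 W46 (by decide)).2
    rw [show W3 * W46 = (0:M3) from by decide, hv0] at t
    exact t.symm
  have k1 : v W31 = 1 := by
    rw [show W31 = (1:M3) from by decide]
    exact hv1
  rcases d29 with k2 | k2
  ·
    have k3 : v W12 = 0 := by linear_combination ep74_124_72 + (v W13) * k2
    have k4 : v W35 = 0 := by linear_combination ep124_134_133 + (v W36) * k2
    have k5 : v W21 = 0 := by linear_combination ep117_124_115 + (v W23) * k2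
    have k6 : v W47 = 0 := by linear_combination ep124_157_155 + (v W49) * k2
    rcases d28 with k7 | k7
    ·
      have k8 : v W20 = 0 := by linear_combination ep116_122_113 + (v W22) * k7
      have k9 : v W16 = 0 := by linear_combination ep106_122_104 + (v W18) * k7
      have k10 : v W4 = 0 := by
        rcases d4 with hz | ho
        · exact hz
        · exact absurd (show (1:F) = 0 by linear_combination k7 - es11_153_122 - ho - os11_153_122 + (v W46) * ho) one_ne_zero
      have k11 : v W32 = 0 := by linear_combination es11_155_127 + k10 + k6
      have k12 : v W46 = 0 := by linear_combination k7 - es11_153_122 - k10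
      rcases d22 with k13 | k13
      ·
        have k14 : v W24 = 0 := by linear_combination ep116_129_118 + (v W34) * k13
        have k15 : v W7 = 0 := by
          rcases d7 with hz | ho
          · exact hz
          · exact absurd (show (1:F) = 0 by linear_combination k13 - es18_143_116 - ho - os18_143_116 + (v W42) * ho) one_ne_zero
        have k16 : v W42 = 0 := by linear_combination k13 - es18_143_116 - k15
        have k17 : v W9 = 1 := by linear_combination k1 - es20_143_126 - k16
        have k18 : v W1 = 1 := by linear_combination k17 - es4_72_20 - k3
        have k19 : v W52 = 0 := by linear_combination os4_163_141 + (-(v W52)) * k18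
        have k20 : v W51 = 0 := by linear_combination os4_161_117 + (-(v W51)) * k18
        have k21 : v W48 = 0 := by linear_combination es18_161_156 + k15 + k20
        have k22 : v W40 = 1 := by linear_combination es4_163_141 + k18 + k19
        have k23 : v W23 = 1 := by linear_combination es4_161_117 + k18 + k20
        have k24 : v W11 = 0 := by linear_combination os22_141_126 + (-(v W11)) * k22
        have k25 : v W3 = 1 := by linear_combination k1 - es9_156_126 - k21
        have k26 : v W27 = 1 := by linear_combination es9_153_121 + k25 + k12
        have k27 : v W33 = 0 := by linear_combination k14 - ep117_128_118 + (-(v W33)) * k23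
        have k28 : v W20 = 1 := by linear_combination ep117_121_113 + (v W27) * k23 + k26
        exact one_ne_zero (show (1:F) = 0 by linear_combination k8 - k28)
      ·
        have k29 : v W30 = 0 := by linear_combination k5 - ep116_125_115 + (-(v W30)) * k13
        have k30 : v W17 = 0 := by linear_combination ep106_125_105 + (v W18) * k29
        have k31 : v W37 = 0 := by linear_combination ep125_136_135 + (v W38) * k29
        have k32 : v W3 = 0 := by linear_combination k29 - es9_155_125 - k6
        have k33 : v W48 = 1 := by linear_combination k1 - es9_156_126 - k32
        have k34 : v W27 = 0 := by linear_combination es9_153_121 + k32 + k12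
        rcases d23 with k35 | k35
        ·
          have k36 : v W24 = 0 := by linear_combination ep117_128_118 + (v W33) * k35
          have k37 : v W34 = 0 := by linear_combination k36 - ep116_129_118 + (-(v W34)) * k13
          have k38 : v W2 = 0 := by
            rcases d2 with hz | ho
            · exact hz
            · exact absurd (show (1:F) = 0 by linear_combination k37 - es8_158_129 - ho - os8_158_129 + (v W50) * ho) one_ne_zero
          have k39 : v W1 = 0 := by
            rcases d1 with hz | ho
            · exact hz
            · exact absurd (show (1:F) = 0 by linear_combination k35 - es4_161_117 - ho - os4_161_117 + (v W51) * ho) one_ne_zero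
          have k40 : v W49 = 1 := by linear_combination k1 - es8_157_126 - k38
          have k41 : v W9 = 0 := by linear_combination es4_72_20 + k39 + k3
          have k42 : v W50 = 0 := by linear_combination k37 - es8_158_129 - k38
          have k43 : v W51 = 0 := by linear_combination k35 - es4_161_117 - k39
          have k44 : v W42 = 1 := by linear_combination k1 - es20_143_126 - k41
          have k45 : v W6 = 0 := by linear_combination os17_143_112 + (-(v W6)) * k44
          have k46 : v W7 = 0 := by linear_combination os18_143_116 + (-(v W7)) * k44
          exact one_ne_zero (show (1:F) = 0 by linear_combination es18_161_156 - k33 + k46 + k43)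
        ·
          rcases d7 with k47 | k47
          ·
            have k48 : v W42 = 1 := by linear_combination k13 - es18_143_116 - k47
            have k49 : v W51 = 1 := by linear_combination k33 - es18_161_156 - k47
            have k50 : v W1 = 0 := by linear_combination os4_161_117 + (-(v W1)) * k49
            have k51 : v W8 = 0 := by linear_combination os19_143_119 + (-(v W8)) * k48
            have k52 : v W9 = 0 := by linear_combination os20_143_126 + (-(v W9)) * k48
            have k53 : v W6 = 0 := by linear_combination os17_143_112 + (-(v W6)) * k48
            have k54 : v W43 = 1 := by linear_combination k1 - es19_144_126 - k51
            have k55 : v W25 = 1 := by linear_combination es19_143_119 + k51 + k48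
            have k56 : v W5 = 1 := by linear_combination k54 - es14_155_144 - k6
            have k57 : v W19 = 1 := by linear_combination es17_143_112 + k53 + k48
            have k58 : v W26 = 0 := by linear_combination k5 - ep119_120_115 + (-(v W26)) * k55
            have k59 : v W11 = 1 := by linear_combination k57 - es22_133_112 - k4
            have k60 : v W15 = 1 := by linear_combination es22_113_102 + k59 + k8
            have k61 : v W45 = 0 := by linear_combination os14_149_120 + (-(v W45)) * k56
            have k62 : v W40 = 0 := by linear_combination os22_141_126 + (-(v W40)) * k59
            have k63 : v W41 = 1 := by linear_combination k60 - es18_142_102 - k47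
            have k64 : v W52 = 0 := by linear_combination k62 - es4_163_141 - k50
            exact one_ne_zero (show (1:F) = 0 by linear_combination - es14_149_120 + k58 - k56 - k61)
          ·
            have k65 : v W42 = 0 := by linear_combination os18_143_116 + (-(v W42)) * k47
            have k66 : v W51 = 0 := by linear_combination os18_161_156 + (-(v W51)) * k47
            have k67 : v W41 = 0 := by linear_combination os18_142_102 + (-(v W41)) * k47
            have k68 : v W1 = 1 := by linear_combination k35 - es4_161_117 - k66
            have k69 : v W44 = 0 := by linear_combination os18_147_139 + (-(v W44)) * k47
            have k70 : v W9 = 1 := by linear_combination k1 - es20_143_126 - k65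
            have k71 : v W10 = 1 := by linear_combination k1 - es21_142_126 - k67
            have k72 : v W15 = 1 := by linear_combination es18_142_102 + k47 + k67
            have k73 : v W52 = 0 := by linear_combination os4_163_141 + (-(v W52)) * k68
            have k74 : v W11 = 1 := by linear_combination k72 - es22_113_102 - k8
            have k75 : v W39 = 1 := by linear_combination es18_147_139 + k47 + k69
            have k76 : v W40 = 0 := by linear_combination os22_141_126 + (-(v W40)) * k74
            have k77 : v W0 = 1 := by linear_combination k71 - es0_153_21 - k12
            have k78 : v W26 = 0 := by linear_combination k31 - ep120_139_135 + (-(v W26)) * k75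
            have k79 : v W19 = 1 := by linear_combination es22_133_112 + k74 + k4
            exact one_ne_zero (show (1:F) = 0 by linear_combination - es4_163_141 + k76 - k68 - k73)
    ·
      have k80 : v W38 = 0 := by linear_combination k4 - ep122_136_133 + (-(v W38)) * k7
      have k81 : v W37 = 0 := by linear_combination ep125_136_135 + (v W30) * k80
      have k82 : v W6 = 0 := by
        rcases d6 with hz | ho
        · exact hz
        · exact absurd (show (1:F) = 0 by linear_combination k80 - es17_147_136 - ho - os17_147_136 + (v W44) * ho) one_ne_zero
      have k83 : v W44 = 0 := by linear_combination k80 - es17_147_136 - k82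
      rcases d22 with k84 | k84
      ·
        have k85 : v W20 = 0 := by linear_combination ep116_122_113 + (v W28) * k84
        have k86 : v W24 = 0 := by linear_combination ep116_129_118 + (v W34) * k84
        have k87 : v W7 = 0 := by
          rcases d7 with hz | ho
          · exact hz
          · exact absurd (show (1:F) = 0 by linear_combination k84 - es18_143_116 - ho - os18_143_116 + (v W42) * ho) one_ne_zero
        have k88 : v W39 = 0 := by linear_combination es18_147_139 + k87 + k83
        have k89 : v W42 = 0 := by linear_combination k84 - es18_143_116 - k87
        have k90 : v W9 = 1 := by linear_combination k1 - es20_143_126 - k89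
        have k91 : v W1 = 1 := by linear_combination k90 - es4_72_20 - k3
        have k92 : v W19 = 0 := by linear_combination es17_143_112 + k82 + k89
        have k93 : v W11 = 0 := by linear_combination k92 - es22_133_112 - k4
        have k94 : v W52 = 0 := by linear_combination os4_163_141 + (-(v W52)) * k91
        have k95 : v W51 = 0 := by linear_combination os4_161_117 + (-(v W51)) * k91
        have k96 : v W15 = 0 := by linear_combination es22_113_102 + k93 + k85
        have k97 : v W40 = 1 := by linear_combination k1 - es22_141_126 - k93
        have k98 : v W48 = 0 := by linear_combination es18_161_156 + k87 + k95
        have k99 : v W41 = 0 := by linear_combination k96 - es18_142_102 - k87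
        have k100 : v W23 = 1 := by linear_combination es4_161_117 + k91 + k95
        have k101 : v W3 = 1 := by linear_combination k1 - es9_156_126 - k98
        have k102 : v W46 = 0 := by linear_combination os9_153_121 + (-(v W46)) * k101
        have k103 : v W33 = 0 := by linear_combination k86 - ep117_128_118 + (-(v W33)) * k100
        have k104 : v W27 = 0 := by linear_combination k85 - ep117_121_113 + (-(v W27)) * k100
        have k105 : v W17 = 0 := by linear_combination ep105_121_105 + (v W17) * k104
        have k106 : v W4 = 1 := by linear_combination k7 - es11_153_122 - k102
        have k107 : v W10 = 1 := by linear_combination k1 - es21_142_126 - k99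
        have k108 : v W32 = 1 := by linear_combination es11_155_127 + k106 + k6
        have k109 : v W0 = 1 := by linear_combination k107 - es0_153_21 - k102
        have k110 : v W30 = 1 := by linear_combination es9_155_125 + k101 + k6
        exact one_ne_zero (show (1:F) = 0 by linear_combination - es9_153_121 + k104 - k101 - k102)
      ·
        have k111 : v W30 = 0 := by linear_combination k5 - ep116_125_115 + (-(v W30)) * k84
        have k112 : v W17 = 0 := by linear_combination ep106_125_105 + (v W18) * k111
        have k113 : v W20 = 1 := by linear_combination ep116_122_113 + (v W28) * k84 + k7
        have k114 : v W23 = 1 := by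
          rcases d23 with hz | ho
          · exact absurd (show (1:F) = 0 by linear_combination ep117_121_113 - k113 + (v W27) * hz) one_ne_zero
          · exact ho
        have k115 : v W11 = 0 := by linear_combination os22_113_102 + (-(v W11)) * k113
        have k116 : v W40 = 1 := by linear_combination k1 - es22_141_126 - k115
        have k117 : v W3 = 0 := by linear_combination k111 - es9_155_125 - k6
        have k118 : v W48 = 1 := by linear_combination k1 - es9_156_126 - k117
        have k119 : v W27 = 1 := by
          rcases d27 with hz | ho
          · exact absurd (show (1:F) = 0 by linear_combination ep117_121_113 - k113 + (v W23) * hz) one_ne_zero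
          · exact ho
        have k120 : v W19 = 0 := by linear_combination es22_133_112 + k115 + k4
        have k121 : v W15 = 1 := by linear_combination es22_113_102 + k115 + k113
        have k122 : v W42 = 0 := by linear_combination k120 - es17_143_112 - k82
        have k123 : v W46 = 1 := by linear_combination k119 - es9_153_121 - k117
        have k124 : v W4 = 0 := by linear_combination os11_153_122 + (-(v W4)) * k123
        have k125 : v W7 = 1 := by linear_combination k84 - es18_143_116 - k122
        have k126 : v W51 = 0 := by linear_combination os18_161_156 + (-(v W51)) * k125
        have k127 : v W41 = 0 := by linear_combination os18_142_102 + (-(v W41)) * k125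
        have k128 : v W1 = 1 := by linear_combination k114 - es4_161_117 - k126
        have k129 : v W32 = 0 := by linear_combination es11_155_127 + k124 + k6
        have k130 : v W39 = 1 := by linear_combination es18_147_139 + k125 + k83
        have k131 : v W0 = 0 := by linear_combination os0_153_21 + (-(v W0)) * k123
        have k132 : v W9 = 1 := by linear_combination k1 - es20_143_126 - k122
        have k133 : v W26 = 0 := by linear_combination k81 - ep120_139_135 + (-(v W26)) * k130
        have k134 : v W16 = 0 := by linear_combination ep104_127_104 + (v W16) * k129
        have k135 : v W10 = 1 := by linear_combination k1 - es21_142_126 - k127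
        have k136 : v W52 = 0 := by linear_combination os4_163_141 + (-(v W52)) * k128
        have k137 : v W5 = 0 := by
          rcases d5 with hz | ho
          · exact hz
          · exact absurd (show (1:F) = 0 by linear_combination k133 - es14_149_120 - ho - os14_149_120 + (v W45) * ho) one_ne_zero
        have k138 : v W43 = 0 := by linear_combination es14_155_144 + k137 + k6
        have k139 : v W18 = 0 := by linear_combination k134 - ep106_122_104 + (-(v W18)) * k7
        have k140 : v W45 = 0 := by linear_combination k133 - es14_149_120 - k137
        have k141 : v W8 = 1 := by linear_combination k1 - es19_144_126 - k138
        have k142 : v W25 = 1 := by linear_combination es19_143_119 + k141 + k122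
        exact one_ne_zero (show (1:F) = 0 by linear_combination - es19_142_106 + k139 - k141 - k127)
  ·
    rcases d28 with k143 | k143
    ·
      have k144 : v W35 = 0 := by linear_combination ep122_136_133 + (v W38) * k143
      have k145 : v W20 = 0 := by linear_combination ep116_122_113 + (v W22) * k143
      have k146 : v W36 = 0 := by linear_combination k144 - ep124_134_133 + (-(v W36)) * k2
      have k147 : v W16 = 0 := by linear_combination ep106_122_104 + (v W18) * k143
      have k148 : v W4 = 0 := by
        rcases d4 with hz | ho
        · exact hz
        · exact absurd (show (1:F) = 0 by linear_combination k143 - es11_153_122 - ho - os11_153_122 + (v W46) * ho) one_ne_zero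
      have k149 : v W14 = 0 := by linear_combination ep79_134_79 + (v W14) * k146
      have k150 : v W46 = 0 := by linear_combination k143 - es11_153_122 - k148
      rcases d22 with k151 | k151
      ·
        have k152 : v W21 = 0 := by linear_combination ep116_125_115 + (v W30) * k151
        have k153 : v W23 = 0 := by linear_combination k152 - ep117_124_115 + (-(v W23)) * k2
        have k154 : v W24 = 0 := by linear_combination ep116_129_118 + (v W34) * k151
        have k155 : v W7 = 0 := by
          rcases d7 with hz | ho
          · exact hz
          · exact absurd (show (1:F) = 0 by linear_combination k151 - es18_143_116 - ho - os18_143_116 + (v W42) * ho) one_ne_zero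
        have k156 : v W1 = 0 := by
          rcases d1 with hz | ho
          · exact hz
          · exact absurd (show (1:F) = 0 by linear_combination k153 - es4_161_117 - ho - os4_161_117 + (v W51) * ho) one_ne_zero
        have k157 : v W42 = 0 := by linear_combination k151 - es18_143_116 - k155
        have k158 : v W51 = 0 := by linear_combination k153 - es4_161_117 - k156
        have k159 : v W9 = 1 := by linear_combination k1 - es20_143_126 - k157
        have k160 : v W12 = 1 := by linear_combination k159 - es4_72_20 - k156
        have k161 : v W13 = 1 := by
          rcases d13 with hz | ho
          · exact absurd (show (1:F) = 0 by linear_combination ep74_124_72 - k160 + (v W29) * hz) one_ne_zero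
          · exact ho
        have k162 : v W48 = 0 := by linear_combination es18_161_156 + k155 + k158
        have k163 : v W6 = 1 := by linear_combination k161 - es17_79_74 - k149
        have k164 : v W19 = 1 := by linear_combination es17_143_112 + k163 + k157
        have k165 : v W3 = 1 := by linear_combination k1 - es9_156_126 - k162
        have k166 : v W27 = 1 := by linear_combination es9_153_121 + k165 + k150
        have k167 : v W11 = 1 := by linear_combination k164 - es22_133_112 - k144
        have k168 : v W15 = 1 := by linear_combination es22_113_102 + k167 + k145
        have k169 : v W40 = 0 := by linear_combination os22_141_126 + (-(v W40)) * k167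
        have k170 : v W44 = 0 := by linear_combination os17_147_136 + (-(v W44)) * k163
        have k171 : v W47 = 0 := by linear_combination os9_155_125 + (-(v W47)) * k165
        have k172 : v W49 = 0 := by linear_combination k171 - ep124_157_155 + (-(v W49)) * k2
        have k173 : v W41 = 1 := by linear_combination k168 - es18_142_102 - k155
        have k174 : v W52 = 0 := by linear_combination k169 - es4_163_141 - k156
        have k175 : v W32 = 0 := by linear_combination es11_155_127 + k148 + k171
        have k176 : v W39 = 0 := by linear_combination es18_147_139 + k155 + k170
        have k177 : v W8 = 0 := by linear_combination os19_142_106 + (-(v W8)) * k173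
        have k178 : v W38 = 1 := by linear_combination es17_147_136 + k163 + k170
        have k179 : v W2 = 1 := by linear_combination k1 - es8_157_126 - k172
        have k180 : v W30 = 1 := by linear_combination es9_155_125 + k165 + k171
        have k181 : v W37 = 1 := by linear_combination ep125_136_135 + (v W38) * k180 + k178
        have k182 : v W37 = 0 := by linear_combination ep120_139_135 + (v W26) * k176
        exact one_ne_zero (show (1:F) = 0 by linear_combination k182 - k181)
      ·
        rcases d30 with k183 | k183
        ·
          have k184 : v W21 = 0 := by linear_combination ep116_125_115 + (v W22) * k183
          have k185 : v W17 = 0 := by linear_combination ep106_125_105 + (v W18) * k183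
          have k186 : v W23 = 0 := by linear_combination k184 - ep117_124_115 + (-(v W23)) * k2
          have k187 : v W37 = 0 := by linear_combination ep125_136_135 + (v W38) * k183
          have k188 : v W1 = 0 := by
            rcases d1 with hz | ho
            · exact hz
            · exact absurd (show (1:F) = 0 by linear_combination k186 - es4_161_117 - ho - os4_161_117 + (v W51) * ho) one_ne_zero
          have k189 : v W3 = 0 := by
            rcases d3 with hz | ho
            · exact hz
            · exact absurd (show (1:F) = 0 by linear_combination k183 - es9_155_125 - ho - os9_155_125 + (v W47) * ho) one_ne_zero
          have k190 : v W48 = 1 := by linear_combination k1 - es9_156_126 - k189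
          have k191 : v W27 = 0 := by linear_combination es9_153_121 + k189 + k150
          have k192 : v W24 = 0 := by linear_combination ep117_128_118 + (v W33) * k186
          have k193 : v W34 = 0 := by linear_combination k192 - ep116_129_118 + (-(v W34)) * k151
          have k194 : v W2 = 0 := by
            rcases d2 with hz | ho
            · exact hz
            · exact absurd (show (1:F) = 0 by linear_combination k193 - es8_158_129 - ho - os8_158_129 + (v W50) * ho) one_ne_zero
          have k195 : v W51 = 0 := by linear_combination k186 - es4_161_117 - k188
          have k196 : v W49 = 1 := by linear_combination k1 - es8_157_126 - k194
          have k197 : v W47 = 0 := by linear_combination k183 - es9_155_125 - k189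
          have k198 : v W47 = 1 := by linear_combination ep124_157_155 + (v W49) * k2 + k196
          exact one_ne_zero (show (1:F) = 0 by linear_combination k197 - k198)
        ·
          have k199 : v W21 = 1 := by linear_combination ep116_125_115 + (v W30) * k151 + k183
          have k200 : v W23 = 1 := by
            rcases d23 with hz | ho
            · exact absurd (show (1:F) = 0 by linear_combination ep117_124_115 - k199 + (v W29) * hz) one_ne_zero
            · exact ho
          have k201 : v W27 = 0 := by linear_combination k145 - ep117_121_113 + (-(v W27)) * k200
          have k202 : v W17 = 0 := by linear_combination ep105_121_105 + (v W17) * k201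
          have k203 : v W3 = 0 := by linear_combination k201 - es9_153_121 - k150
          have k204 : v W25 = 1 := by
            rcases d25 with hz | ho
            · exact absurd (show (1:F) = 0 by linear_combination ep119_120_115 - k199 + (v W26) * hz) one_ne_zero
            · exact ho
          have k205 : v W18 = 0 := by linear_combination k202 - ep106_125_105 + (-(v W18)) * k183
          have k206 : v W8 = 0 := by
            rcases d8 with hz | ho
            · exact hz
            · exact absurd (show (1:F) = 0 by linear_combination k205 - es19_142_106 - ho - os19_142_106 + (v W41) * ho) one_ne_zero
          have k207 : v W47 = 1 := by linear_combination k183 - es9_155_125 - k203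
          have k208 : v W48 = 1 := by linear_combination k1 - es9_156_126 - k203
          have k209 : v W26 = 1 := by
            rcases d26 with hz | ho
            · exact absurd (show (1:F) = 0 by linear_combination ep119_120_115 - k199 + (v W25) * hz) one_ne_zero
            · exact ho
          have k210 : v W49 = 1 := by
            rcases d49 with hz | ho
            · exact absurd (show (1:F) = 0 by linear_combination ep124_157_155 - k207 + (v W29) * hz) one_ne_zero
            · exact ho
          have k211 : v W32 = 1 := by linear_combination es11_155_127 + k148 + k207
          have k212 : v W43 = 1 := by linear_combination k1 - es19_144_126 - k206
          have k213 : v W42 = 1 := by linear_combination k204 - es19_143_119 - k206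
          have k214 : v W41 = 0 := by linear_combination k205 - es19_142_106 - k206
          have k215 : v W9 = 0 := by linear_combination os20_143_126 + (-(v W9)) * k213
          have k216 : v W2 = 0 := by linear_combination os8_157_126 + (-(v W2)) * k210
          have k217 : v W5 = 0 := by linear_combination os14_155_144 + (-(v W5)) * k207
          have k218 : v W1 = 0 := by
            rcases d1 with hz | ho
            · exact hz
            · exact absurd (show (1:F) = 0 by linear_combination k215 - es4_72_20 - ho - os4_72_20 + (v W12) * ho) one_ne_zero
          have k219 : v W6 = 0 := by linear_combination os17_143_112 + (-(v W6)) * k213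
          have k220 : v W7 = 0 := by linear_combination os18_143_116 + (-(v W7)) * k213
          have k221 : v W51 = 1 := by linear_combination k208 - es18_161_156 - k220
          have k222 : v W10 = 1 := by linear_combination k1 - es21_142_126 - k214
          have k223 : v W15 = 0 := by linear_combination es18_142_102 + k220 + k214
          have k224 : v W11 = 0 := by linear_combination k223 - es22_113_102 - k145
          have k225 : v W45 = 1 := by linear_combination k209 - es14_149_120 - k217
          have k226 : v W40 = 1 := by linear_combination k1 - es22_141_126 - k224
          have k227 : v W0 = 1 := by linear_combination k222 - es0_153_21 - k150
          have k228 : v W12 = 0 := by linear_combination k215 - es4_72_20 - k218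
          have k229 : v W13 = 0 := by linear_combination es17_79_74 + k219 + k149
          have k230 : v W19 = 1 := by linear_combination es17_143_112 + k219 + k213
          exact one_ne_zero (show (1:F) = 0 by linear_combination es22_133_112 - k230 + k224 + k144)
    ·
      rcases d22 with k231 | k231
      ·
        have k232 : v W21 = 0 := by linear_combination ep116_125_115 + (v W30) * k231
        have k233 : v W20 = 0 := by linear_combination ep116_122_113 + (v W28) * k231
        have k234 : v W23 = 0 := by linear_combination k232 - ep117_124_115 + (-(v W23)) * k2
        have k235 : v W24 = 0 := by linear_combination ep116_129_118 + (v W34) * k231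
        have k236 : v W7 = 0 := by
          rcases d7 with hz | ho
          · exact hz
          · exact absurd (show (1:F) = 0 by linear_combination k231 - es18_143_116 - ho - os18_143_116 + (v W42) * ho) one_ne_zero
        have k237 : v W1 = 0 := by
          rcases d1 with hz | ho
          · exact hz
          · exact absurd (show (1:F) = 0 by linear_combination k234 - es4_161_117 - ho - os4_161_117 + (v W51) * ho) one_ne_zero
        have k238 : v W42 = 0 := by linear_combination k231 - es18_143_116 - k236
        have k239 : v W51 = 0 := by linear_combination k234 - es4_161_117 - k237
        have k240 : v W9 = 1 := by linear_combination k1 - es20_143_126 - k238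
        have k241 : v W12 = 1 := by linear_combination k240 - es4_72_20 - k237
        have k242 : v W13 = 1 := by
          rcases d13 with hz | ho
          · exact absurd (show (1:F) = 0 by linear_combination ep74_124_72 - k241 + (v W29) * hz) one_ne_zero
          · exact ho
        have k243 : v W48 = 0 := by linear_combination es18_161_156 + k236 + k239
        have k244 : v W3 = 1 := by linear_combination k1 - es9_156_126 - k243
        have k245 : v W46 = 0 := by linear_combination os9_153_121 + (-(v W46)) * k244
        have k246 : v W4 = 1 := by linear_combination k143 - es11_153_122 - k245
        have k247 : v W47 = 0 := by linear_combination os11_155_127 + (-(v W47)) * k246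
        have k248 : v W30 = 1 := by linear_combination es9_155_125 + k244 + k247
        have k249 : v W27 = 1 := by linear_combination es9_153_121 + k244 + k245
        have k250 : v W49 = 0 := by linear_combination k247 - ep124_157_155 + (-(v W49)) * k2
        have k251 : v W32 = 1 := by linear_combination es11_155_127 + k246 + k247
        have k252 : v W2 = 1 := by linear_combination k1 - es8_157_126 - k250
        have k253 : v W50 = 0 := by linear_combination os8_158_129 + (-(v W50)) * k252
        have k254 : v W34 = 1 := by linear_combination es8_158_129 + k252 + k253
        rcases d14 with k255 | k255
        ·
          have k256 : v W6 = 1 := by linear_combination k242 - es17_79_74 - k255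
          have k257 : v W19 = 1 := by linear_combination es17_143_112 + k256 + k238
          have k258 : v W44 = 0 := by linear_combination os17_147_136 + (-(v W44)) * k256
          have k259 : v W39 = 0 := by linear_combination es18_147_139 + k236 + k258
          have k260 : v W38 = 1 := by linear_combination es17_147_136 + k256 + k258
          have k261 : v W35 = 1 := by linear_combination ep122_136_133 + (v W38) * k143 + k260
          have k262 : v W36 = 1 := by
            rcases d36 with hz | ho
            · exact absurd (show (1:F) = 0 by linear_combination ep124_134_133 - k261 + (v W29) * hz) one_ne_zero
            · exact ho
          have k263 : v W37 = 1 := by linear_combination ep125_136_135 + (v W38) * k248 + k260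
          have k264 : v W37 = 0 := by linear_combination ep120_139_135 + (v W26) * k259
          exact one_ne_zero (show (1:F) = 0 by linear_combination k264 - k263)
        ·
          have k265 : v W36 = 1 := by
            rcases d36 with hz | ho
            · exact absurd (show (1:F) = 0 by linear_combination ep79_134_79 - k255 + (v W14) * hz) one_ne_zero
            · exact ho
          have k266 : v W35 = 1 := by linear_combination ep124_134_133 + (v W36) * k2 + k265
          have k267 : v W11 = 0 := by linear_combination os22_133_112 + (-(v W11)) * k266
          have k268 : v W15 = 0 := by linear_combination es22_113_102 + k267 + k233
          have k269 : v W40 = 1 := by linear_combination k1 - es22_141_126 - k267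
          have k270 : v W6 = 0 := by linear_combination os17_79_74 + (-(v W6)) * k255
          have k271 : v W19 = 0 := by linear_combination es17_143_112 + k270 + k238
          have k272 : v W38 = 1 := by
            rcases d38 with hz | ho
            · exact absurd (show (1:F) = 0 by linear_combination ep122_136_133 - k266 + (v W28) * hz) one_ne_zero
            · exact ho
          have k273 : v W37 = 1 := by linear_combination ep125_136_135 + (v W38) * k248 + k272
          have k274 : v W26 = 1 := by
            rcases d26 with hz | ho
            · exact absurd (show (1:F) = 0 by linear_combination ep120_139_135 - k273 + (v W39) * hz) one_ne_zero
            · exact ho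
          exact one_ne_zero (show (1:F) = 0 by linear_combination - es22_133_112 + k271 - k267 - k266)
      ·
        have k275 : v W20 = 1 := by linear_combination ep116_122_113 + (v W28) * k231 + k143
        have k276 : v W23 = 1 := by
          rcases d23 with hz | ho
          · exact absurd (show (1:F) = 0 by linear_combination ep117_121_113 - k275 + (v W27) * hz) one_ne_zero
          · exact ho
        have k277 : v W11 = 0 := by linear_combination os22_113_102 + (-(v W11)) * k275
        have k278 : v W40 = 1 := by linear_combination k1 - es22_141_126 - k277
        have k279 : v W21 = 1 := by linear_combination ep117_124_115 + (v W29) * k276 + k2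
        have k280 : v W27 = 1 := by
          rcases d27 with hz | ho
          · exact absurd (show (1:F) = 0 by linear_combination ep117_121_113 - k275 + (v W23) * hz) one_ne_zero
          · exact ho
        have k281 : v W15 = 1 := by linear_combination es22_113_102 + k277 + k275
        have k282 : v W25 = 1 := by
          rcases d25 with hz | ho
          · exact absurd (show (1:F) = 0 by linear_combination ep119_120_115 - k279 + (v W26) * hz) one_ne_zero
          · exact ho
        have k283 : v W30 = 1 := by
          rcases d30 with hz | ho
          · exact absurd (show (1:F) = 0 by linear_combination ep116_125_115 - k279 + (v W22) * hz) one_ne_zero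
          · exact ho
        have k284 : v W26 = 1 := by
          rcases d26 with hz | ho
          · exact absurd (show (1:F) = 0 by linear_combination ep119_120_115 - k279 + (v W25) * hz) one_ne_zero
          · exact ho
        rcases d47 with k285 | k285
        ·
          have k286 : v W49 = 0 := by linear_combination k285 - ep124_157_155 + (-(v W49)) * k2
          have k287 : v W2 = 1 := by linear_combination k1 - es8_157_126 - k286
          have k288 : v W3 = 1 := by linear_combination k283 - es9_155_125 - k285
          have k289 : v W48 = 0 := by linear_combination os9_156_126 + (-(v W48)) * k288
          have k290 : v W46 = 0 := by linear_combination os9_153_121 + (-(v W46)) * k288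
          have k291 : v W4 = 1 := by linear_combination k143 - es11_153_122 - k290
          have k292 : v W50 = 0 := by linear_combination os8_158_129 + (-(v W50)) * k287
          have k293 : v W7 = 0 := by
            rcases d7 with hz | ho
            · exact hz
            · exact absurd (show (1:F) = 0 by linear_combination k289 - es18_161_156 - ho - os18_161_156 + (v W51) * ho) one_ne_zero
          have k294 : v W41 = 1 := by linear_combination k281 - es18_142_102 - k293
          have k295 : v W32 = 1 := by linear_combination es11_155_127 + k291 + k285
          have k296 : v W8 = 0 := by linear_combination os19_142_106 + (-(v W8)) * k294
          have k297 : v W42 = 1 := by linear_combination k231 - es18_143_116 - k293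
          have k298 : v W34 = 1 := by linear_combination es8_158_129 + k287 + k292
          have k299 : v W51 = 0 := by linear_combination k289 - es18_161_156 - k293
          have k300 : v W10 = 0 := by linear_combination os21_142_126 + (-(v W10)) * k294
          have k301 : v W1 = 1 := by linear_combination k276 - es4_161_117 - k299
          have k302 : v W43 = 1 := by linear_combination k1 - es19_144_126 - k296
          have k303 : v W18 = 1 := by linear_combination es19_142_106 + k296 + k294
          have k304 : v W0 = 0 := by linear_combination k300 - es0_153_21 - k290
          have k305 : v W9 = 0 := by linear_combination os20_143_126 + (-(v W9)) * k297
          have k306 : v W5 = 1 := by linear_combination k302 - es14_155_144 - k285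
          have k307 : v W12 = 0 := by linear_combination os4_72_20 + (-(v W12)) * k301
          have k308 : v W6 = 0 := by linear_combination os17_143_112 + (-(v W6)) * k297
          have k309 : v W13 = 0 := by linear_combination k307 - ep74_124_72 + (-(v W13)) * k2
          have k310 : v W17 = 1 := by linear_combination ep106_125_105 + (v W30) * k303 + k283
          have k311 : v W16 = 1 := by linear_combination ep106_122_104 + (v W28) * k303 + k143
          have k312 : v W24 = 1 := by linear_combination ep116_129_118 + (v W34) * k231 + k298
          have k313 : v W52 = 0 := by linear_combination os4_163_141 + (-(v W52)) * k301
          have k314 : v W45 = 0 := by linear_combination os14_149_120 + (-(v W45)) * k306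
          exact one_ne_zero (show (1:F) = 0 by linear_combination - es4_72_20 + k305 - k301 - k307)
        ·
          have k315 : v W49 = 1 := by
            rcases d49 with hz | ho
            · exact absurd (show (1:F) = 0 by linear_combination ep124_157_155 - k285 + (v W29) * hz) one_ne_zero
            · exact ho
          have k316 : v W4 = 0 := by linear_combination os11_155_127 + (-(v W4)) * k285
          have k317 : v W2 = 0 := by linear_combination os8_157_126 + (-(v W2)) * k315
          have k318 : v W5 = 0 := by linear_combination os14_155_144 + (-(v W5)) * k285
          have k319 : v W3 = 0 := by linear_combination os9_155_125 + (-(v W3)) * k285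
          have k320 : v W48 = 1 := by linear_combination k1 - es9_156_126 - k319
          have k321 : v W46 = 1 := by linear_combination k280 - es9_153_121 - k319
          have k322 : v W45 = 1 := by linear_combination k284 - es14_149_120 - k318
          have k323 : v W32 = 1 := by linear_combination es11_155_127 + k316 + k285
          have k324 : v W0 = 0 := by linear_combination os0_153_21 + (-(v W0)) * k321
          have k325 : v W43 = 1 := by linear_combination es14_155_144 + k318 + k285
          have k326 : v W8 = 0 := by linear_combination os19_144_126 + (-(v W8)) * k325
          have k327 : v W42 = 1 := by linear_combination k282 - es19_143_119 - k326
          have k328 : v W10 = 1 := by linear_combination es0_153_21 + k324 + k321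
          have k329 : v W9 = 0 := by linear_combination os20_143_126 + (-(v W9)) * k327
          have k330 : v W1 = 0 := by
            rcases d1 with hz | ho
            · exact hz
            · exact absurd (show (1:F) = 0 by linear_combination k329 - es4_72_20 - ho - os4_72_20 + (v W12) * ho) one_ne_zero
          have k331 : v W6 = 0 := by linear_combination os17_143_112 + (-(v W6)) * k327
          have k332 : v W7 = 0 := by linear_combination os18_143_116 + (-(v W7)) * k327
          have k333 : v W51 = 1 := by linear_combination k320 - es18_161_156 - k332
          have k334 : v W41 = 0 := by linear_combination os21_142_126 + (-(v W41)) * k328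
          exact one_ne_zero (show (1:F) = 0 by linear_combination es18_142_102 - k281 + k332 + k334)

private theorem comp_post {A C D : Type*} [Ring A] [CommRing C] [CommRing D]
    {f : A → C} (hf : IsPartialRingHom f) (π : C →+* D) : IsPartialRingHom (fun x => π (f x)) := by
  obtain ⟨h0, h1, h2⟩ := hf
  refine ⟨by simp [h0], by simp [h1], fun x y hxy => ?_⟩
  obtain ⟨ha, hm⟩ := h2 x y hxy
  exact ⟨by simp [ha], by simp [hm]⟩

private theorem comp_pre {A B C : Type*} [Ring A] [Ring B] [CommRing C]
    (ψ : A →+* B) {f : B → C} (hf : IsPartialRingHom f) : IsPartialRingHom (fun x => f (ψ x)) := by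
  obtain ⟨h0, h1, h2⟩ := hf
  refine ⟨by simp [h0], by simp [h1], fun x y hxy => ?_⟩
  have hc : ψ x * ψ y = ψ y * ψ x := by rw [← map_mul, ← map_mul, hxy]
  obtain ⟨ha, hm⟩ := h2 (ψ x) (ψ y) hc
  exact ⟨by simpa [map_add] using ha, by simpa [map_mul] using hm⟩

private theorem sum_family {A C : Type*} [Ring A] [CommRing C] {f : A → C}
    (hf : IsPartialRingHom f) {ι : Type*} (s : Finset ι) (x : ι → A)
    (hcomm : ∀ i j, x i * x j = x j * x i) :
    f (∑ i ∈ s, x i) = ∑ i ∈ s, f (x i) := by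
  classical
  induction s using Finset.cons_induction with
  | empty => simpa using hf.1
  | cons a s ha ih =>
    rw [Finset.sum_cons, Finset.sum_cons, ← ih]
    have hc : x a * (∑ i ∈ s, x i) = (∑ i ∈ s, x i) * x a := by
      rw [Finset.mul_sum, Finset.sum_mul]
      exact Finset.sum_congr rfl fun i _ => hcomm a i
    exact (hf.2.2 _ _ hc).1

/-- For every ring `R`, every `n ≥ 3`, and every nontrivial commutative ring `C`, there is
no morphism of partial rings from `Mₙ(R)` to `C`. -/
theorem no_partial_ring_hom_matrix_ring (R : Type*) [Ring R] (n : ℕ) (hn : 3 ≤ n)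
    (C : Type*) [CommRing C] [Nontrivial C] :
    ¬ ∃ f : Matrix (Fin n) (Fin n) R → C, IsPartialRingHom f := by
  rintro ⟨f, hf⟩
  classical
  obtain ⟨mI, hmI⟩ := Ideal.exists_maximal C
  haveI : mI.IsPrime := hmI.isPrime
  let ψ : Matrix (Fin n) (Fin n) ℤ →+* Matrix (Fin n) (Fin n) R :=
    (Int.castRingHom R).mapMatrix
  set h : Matrix (Fin n) (Fin n) ℤ → C ⧸ mI := fun x => Ideal.Quotient.mk mI (f (ψ x)) with hdefh
  have hh : IsPartialRingHom h := comp_pre ψ (comp_post hf (Ideal.Quotient.mk mI))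
  -- matrix unit facts
  have hEmul0 : ∀ i j k l : Fin n, j ≠ k →
      Matrix.single i j (1:ℤ) * Matrix.single k l (1:ℤ) = 0 :=
    fun i j k l hjk => Matrix.single_mul_single_of_ne 1 i j k hjk 1
  have hEmul : ∀ i j k : Fin n,
      Matrix.single i j (1:ℤ) * Matrix.single j k (1:ℤ)
        = Matrix.single i k (1:ℤ) :=
    fun i j k => by simpa using Matrix.single_mul_single_same 1 i j k 1
  set p : Fin n → C ⧸ mI := fun i => h (Matrix.single i i (1:ℤ)) with hdefp
  have horth : ∀ i j : Fin n, i ≠ j → p i * p j = 0 := by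
    intro i j hij
    have := (hh.2.2 _ _ ((hEmul0 i i j j hij).trans (hEmul0 j j i i (Ne.symm hij)).symm)).2
    rw [hEmul0 i i j j hij, hh.1] at this
    exact this.symm
  have hidem : ∀ i : Fin n, p i = 0 ∨ p i = 1 := by
    intro i
    apply idem01
    have := (hh.2.2 _ _ (rfl : Matrix.single i i (1:ℤ) * Matrix.single i i 1 = _)).2
    rw [hEmul i i i] at this
    exact this.symm
  have hone : (1 : Matrix (Fin n) (Fin n) ℤ) = ∑ i, Matrix.single i i (1:ℤ) := by
    conv_lhs => rw [Matrix.matrix_eq_sum_single (1 : Matrix (Fin n) (Fin n) ℤ)]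
    refine Finset.sum_congr rfl fun i _ => ?_
    rw [Finset.sum_eq_single i]
    · rw [Matrix.one_apply_eq]
    · intro j _ hj
      rw [Matrix.one_apply_ne (Ne.symm hj), Matrix.single_zero]
    · intro hi; exact absurd (Finset.mem_univ i) hi
  have hsum : (1 : C ⧸ mI) = ∑ i, p i := by
    rw [← hh.2.1, hone]
    refine sum_family hh Finset.univ _ (fun i j => ?_)
    rcases eq_or_ne i j with rfl | hij
    · rfl
    · rw [hEmul0 i i j j hij, hEmul0 j j i i (Ne.symm hij)]
  have hex : ∃ a : Fin n, p a = 1 := by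
    by_contra hno
    push_neg at hno
    have hz : ∀ i : Fin n, p i = 0 := fun i => (hidem i).resolve_right (hno i)
    rw [Finset.sum_congr rfl (fun i _ => hz i), Finset.sum_const_zero] at hsum
    exact one_ne_zero hsum
  obtain ⟨a, hpa⟩ := hex
  haveI : Nontrivial (Fin n) := by
    constructor
    exact ⟨⟨0, by omega⟩, ⟨1, by omega⟩, by simp [Fin.ext_iff]⟩
  obtain ⟨b, hba⟩ := exists_ne a
  have hexc : ∃ c : Fin n, c ≠ a ∧ c ≠ b := by
    by_contra hc
    push_neg at hc
    have hsub : (Finset.univ : Finset (Fin n)) ⊆ {a, b} := by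
      intro x _
      rcases eq_or_ne x a with rfl | hxa
      · simp
      · simp [hc x hxa]
    have hle := Finset.card_le_card hsub
    have h2 : ({a, b} : Finset (Fin n)).card ≤ 2 := (Finset.card_insert_le _ _).trans (by simp)
    simp only [Finset.card_univ, Fintype.card_fin] at hle
    omega
  obtain ⟨c, hca, hcb⟩ := hexc
  have hpb : p b = 0 := by
    have h1 := horth b a hba
    rw [hpa, mul_one] at h1
    exact h1
  have hpc : p c = 0 := by
    have h1 := horth c a hca
    rw [hpa, mul_one] at h1
    exact h1
  -- block embedding of 3x3 integer matrices
  let e : Fin 3 → Fin n := ![a, b, c]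
  have he : ∀ i j : Fin 3, i ≠ j → e i ≠ e j := by
    intro i j hij
    fin_cases i <;> fin_cases j <;>
      simp_all [e] <;>
      first
        | exact hba
        | exact Ne.symm hba
        | exact hca
        | exact Ne.symm hca
        | exact hcb
        | exact Ne.symm hcb
  set φ : M3 → Matrix (Fin n) (Fin n) ℤ :=
    fun A => ∑ i : Fin 3, ∑ j : Fin 3, Matrix.single (e i) (e j) (A i j) with hdefφ
  have hφadd : ∀ A B : M3, φ (A + B) = φ A + φ B := by
    intro A B
    simp only [hdefφ, Matrix.add_apply, Matrix.single_add, Finset.sum_add_distrib]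
  have hstd_sum : ∀ (x y : Fin n) (g : Fin 3 → ℤ),
      Matrix.single x y (∑ j, g j) = ∑ j, Matrix.single x y (g j) := by
    intro x y g
    exact map_sum
      (⟨⟨fun v => Matrix.single x y v, Matrix.single_zero x y⟩,
        fun u w => Matrix.single_add x y u w⟩ : ℤ →+ Matrix (Fin n) (Fin n) ℤ) g _
  have hφmul : ∀ A B : M3, φ (A * B) = φ A * φ B := by
    intro A B
    have hrhs : φ A * φ B = ∑ i : Fin 3, ∑ j : Fin 3,
        (Matrix.single (e i) (e j) (A i j)) * φ B := by
      conv_lhs => rw [hdefφ]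
      rw [Finset.sum_mul]
      exact Finset.sum_congr rfl fun i _ => Finset.sum_mul _ _ _
    rw [hrhs, hdefφ]
    simp only []
    have key : ∀ i j : Fin 3,
        (Matrix.single (e i) (e j) (A i j)) * (∑ k : Fin 3, ∑ l : Fin 3,
          Matrix.single (e k) (e l) (B k l))
        = ∑ l : Fin 3, Matrix.single (e i) (e l) (A i j * B j l) := by
      intro i j
      rw [Finset.mul_sum]
      rw [Finset.sum_eq_single j]
      · rw [Finset.mul_sum]
        refine Finset.sum_congr rfl fun l _ => ?_
        exact Matrix.single_mul_single_same (A i j) (e i) (e j) (e l) (B j l)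
      · intro k _ hkj
        rw [Finset.mul_sum]
        refine Finset.sum_eq_zero fun l _ => ?_
        exact Matrix.single_mul_single_of_ne (A i j) (e i) (e j) _ (he j k (Ne.symm hkj)) (B k l)
      · intro hj; exact absurd (Finset.mem_univ j) hj
    calc ∑ i : Fin 3, ∑ j : Fin 3, Matrix.single (e i) (e j) ((A * B) i j)
        = ∑ i : Fin 3, ∑ j : Fin 3, ∑ l : Fin 3,
            Matrix.single (e i) (e l) (A i j * B j l) := by
          refine Finset.sum_congr rfl fun i _ => ?_
          rw [Finset.sum_comm]
          refine Finset.sum_congr rfl fun l _ => ?_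
          rw [Matrix.mul_apply, hstd_sum]
      _ = ∑ i : Fin 3, ∑ j : Fin 3,
            (Matrix.single (e i) (e j) (A i j)) * (∑ k : Fin 3, ∑ l : Fin 3,
              Matrix.single (e k) (e l) (B k l)) := by
          refine Finset.sum_congr rfl fun i _ => Finset.sum_congr rfl fun j _ => ?_
          rw [key i j]
  have hφ0 : φ 0 = 0 := by
    simp only [hdefφ, Matrix.zero_apply, Matrix.single_zero, Finset.sum_const_zero]
  have hφ1 : φ 1 = Matrix.single a a (1:ℤ) + Matrix.single b b (1:ℤ)
      + Matrix.single c c (1:ℤ) := by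
    rw [hdefφ]
    simp only []
    rw [Fin.sum_univ_three, Fin.sum_univ_three, Fin.sum_univ_three, Fin.sum_univ_three]
    norm_num [Matrix.one_apply, e, Matrix.single_zero]
    simp only [show ((0:Fin 3) = 2) = False from by decide,
      show ((1:Fin 3) = 2) = False from by decide,
      show ((2:Fin 3) = 0) = False from by decide,
      show ((2:Fin 3) = 1) = False from by decide,
      if_false, Matrix.single_zero, add_zero, zero_add]
    try abel
  -- the partial-hom-like map on 3x3 matrices
  set v : M3 → C ⧸ mI := fun A => h (φ A) with hdefv
  have hv : ∀ A B : M3, A * B = B * A → v (A + B) = v A + v B ∧ v (A * B) = v A * v B := by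
    intro A B hAB
    have hcomm : φ A * φ B = φ B * φ A := by rw [← hφmul, ← hφmul, hAB]
    obtain ⟨hadd, hmul⟩ := hh.2.2 (φ A) (φ B) hcomm
    constructor
    · rw [hdefv]; simp only []; rw [hφadd]; exact hadd
    · rw [hdefv]; simp only []; rw [hφmul]; exact hmul
  have hv0 : v 0 = 0 := by rw [hdefv]; simp only []; rw [hφ0]; exact hh.1
  have hv1 : v 1 = 1 := by
    rw [hdefv]; simp only []; rw [hφ1]
    have c1 : Matrix.single a a (1:ℤ) * Matrix.single b b (1:ℤ)
        = Matrix.single b b (1:ℤ) * Matrix.single a a (1:ℤ) := by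
      rw [hEmul0 a a b b (Ne.symm hba), hEmul0 b b a a hba]
    have c2 : (Matrix.single a a (1:ℤ) + Matrix.single b b (1:ℤ))
        * Matrix.single c c (1:ℤ) = Matrix.single c c (1:ℤ)
        * (Matrix.single a a (1:ℤ) + Matrix.single b b (1:ℤ)) := by
      rw [add_mul, mul_add, hEmul0 a a c c (Ne.symm hca), hEmul0 b b c c (Ne.symm hcb),
        hEmul0 c c a a hca, hEmul0 c c b b hcb]
    rw [(hh.2.2 _ _ c2).1, (hh.2.2 _ _ c1).1]
    have : p a + p b + p c = 1 := by rw [hpa, hpb, hpc]; ring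
    exact this
  exact core_refutation v hv0 hv1 hv
end

section
/- For every ring R and every natural number n ≥ 3, the colimit in the category CommRingCat of commutative rings of the diagram of commutative subrings of Mₙ(R) — the functor from the poset (under inclusion) of subrings of Matrix (Fin n) (Fin n) R with commutative multiplication to CommRingCat, sending each such subring to itself as a commutative ring and each inclusion to the inclusion ring homomorphism — is the zero ring, i.e., its underlying type is a subsingleton. -/
open CategoryTheory

/-- The poset (under inclusion) of commutative subrings of a ring `M`. -/
abbrev CommSubring (M : Type) [Ring M] := {C : Subring M // ∀ x y : C, x * y = y * x}

noncomputable instance (M : Type) [Ring M] (C : CommSubring M) : CommRing C.1 :=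
  { (inferInstance : Ring C.1) with mul_comm := fun a b => C.2 a b }

/-- The diagram of commutative subrings of `M` in `CommRingCat`, sending each commutative
subring to itself as a commutative ring and each inclusion to the inclusion ring
homomorphism. -/
noncomputable def commSubringDiagram (M : Type) [Ring M] : CommSubring M ⥤ CommRingCat where
  obj C := CommRingCat.of C.1
  map {C D} h := CommRingCat.ofHom (Subring.inclusion (leOfHom h))
  map_id := by intros; rfl
  map_comp := by intros; rfl

section Infra
variable {M : Type} [Ring M]

theorem closure_comm (s : Set M) (hs : ∀ x ∈ s, ∀ y ∈ s, x * y = y * x) :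
    ∀ x y : (Subring.closure s), x * y = y * x := by
  have h1 : Subring.closure s ≤ Subring.centralizer s :=
    Subring.closure_le.2 (fun z hz => Subring.mem_centralizer_iff.2 fun g hg => hs g hg z hz)
  rintro ⟨x, hx⟩ ⟨y, hy⟩
  ext
  have hy' : ∀ g ∈ s, g * y = y * g := Subring.mem_centralizer_iff.1 (h1 hy)
  have h2 : Subring.closure s ≤ Subring.centralizer {y} :=
    Subring.closure_le.2 (fun z hz => Subring.mem_centralizer_iff.2 (by
      rintro g rfl
      exact (hy' z hz).symm))
  exact (Subring.mem_centralizer_iff.1 (h2 hx) y rfl).symm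

variable (K : Type) [CommRing K] (ψ : (C : CommSubring M) → C.1 →+* K)
  (hψ : ∀ (C D : CommSubring M) (h : C ≤ D) (a : M) (ha : a ∈ C.1),
    ψ D ⟨a, h ha⟩ = ψ C ⟨a, ha⟩)

noncomputable def sgl (a : M) : CommSubring M :=
  ⟨Subring.closure {a}, closure_comm _ (by rintro x rfl y rfl; rfl)⟩

noncomputable def vv (a : M) : K := ψ (sgl a) ⟨a, Subring.subset_closure rfl⟩

variable {K}
include hψ

theorem vv_eq (C : CommSubring M) (a : M) (ha : a ∈ C.1) : vv K ψ a = ψ C ⟨a, ha⟩ := by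
  have h : sgl a ≤ C := Subring.closure_le.2 (by rintro x rfl; exact ha)
  rw [vv, ← hψ _ _ h a (Subring.subset_closure rfl)]

theorem vv_one : vv K ψ 1 = 1 := by
  rw [vv_eq ψ hψ (sgl 1) 1 (Subring.subset_closure rfl)]
  exact map_one _

theorem vv_mul (a b : M) (h : a * b = b * a) : vv K ψ (a * b) = vv K ψ a * vv K ψ b := by
  set C : CommSubring M := ⟨Subring.closure {a, b}, closure_comm _ (by
    rintro x (rfl | rfl) y (rfl | rfl) <;> simp [h])⟩ with hC
  have haC : a ∈ C.1 := Subring.subset_closure (by simp)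
  have hbC : b ∈ C.1 := Subring.subset_closure (by simp)
  rw [vv_eq ψ hψ C a haC, vv_eq ψ hψ C b hbC, vv_eq ψ hψ C (a*b) (mul_mem haC hbC)]
  rw [← map_mul]
  rfl

theorem vv_add (a b : M) (h : a * b = b * a) : vv K ψ (a + b) = vv K ψ a + vv K ψ b := by
  set C : CommSubring M := ⟨Subring.closure {a, b}, closure_comm _ (by
    rintro x (rfl | rfl) y (rfl | rfl) <;> simp [h])⟩ with hC
  have haC : a ∈ C.1 := Subring.subset_closure (by simp)
  have hbC : b ∈ C.1 := Subring.subset_closure (by simp)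
  rw [vv_eq ψ hψ C a haC, vv_eq ψ hψ C b hbC, vv_eq ψ hψ C (a+b) (add_mem haC hbC)]
  rw [← map_add]
  rfl

theorem vv_zero : vv K ψ 0 = 0 := by
  rw [vv_eq ψ hψ (sgl 0) 0 (Subring.subset_closure rfl)]
  exact map_zero _

theorem vv_sum {ι : Type} (t : Finset ι) (f : ι → M)
    (hf : ∀ i ∈ t, ∀ j ∈ t, f i * f j = f j * f i) :
    vv K ψ (∑ i ∈ t, f i) = ∑ i ∈ t, vv K ψ (f i) := by
  set C : CommSubring M := ⟨Subring.closure (f '' t), closure_comm _ (by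
    rintro x ⟨i, hi, rfl⟩ y ⟨j, hj, rfl⟩; exact hf i hi j hj)⟩ with hC
  have hmem : ∀ i ∈ t, f i ∈ C.1 := fun i hi => Subring.subset_closure ⟨i, hi, rfl⟩
  rw [vv_eq ψ hψ C (∑ i ∈ t, f i) (sum_mem hmem)]
  have : (⟨∑ i ∈ t, f i, sum_mem hmem⟩ : C.1) = ∑ i ∈ t.attach, ⟨f i.1, hmem i.1 i.2⟩ := by
    ext
    push_cast
    rw [← Finset.sum_attach t f]
  rw [this, map_sum, ← Finset.sum_attach t (fun i => vv K ψ (f i))]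
  exact Finset.sum_congr rfl (fun i _ => (vv_eq ψ hψ C (f i.1) (hmem i.1 i.2)).symm)

end Infra

theorem sq01 {K : Type} [CommRing K] [IsDomain K] (x : K) (h : x * x = x) : x = 0 ∨ x = 1 := by
  rcases mul_eq_zero.1 (show x * (x - 1) = 0 by linear_combination h) with h'|h'
  · exact Or.inl h'
  · exact Or.inr (by linear_combination h')

theorem stage1 (K : Type) [CommRing K] [IsDomain K]
    (x0 x1 x2 x3 x4 x5 x6 x7 x8 x9 x10 x11 x12 x13 x14 x15 x16 x17 x18 x19 x20 x21 x22 x23 x24 x25 x26 x27 x28 x29 x30 x31 x32 x33 x34 x35 x36 x37 x38 x39 x40 x41 : K)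
    (u0 : x0 = 0)
    (d1 : x1 = 0 ∨ x1 = 1)
    (d2 : x2 = 0 ∨ x2 = 1)
    (d3 : x3 = 0 ∨ x3 = 1)
    (u4 : x4 = 1)
    (u5 : x5 = 0)
    (d6 : x6 = 0 ∨ x6 = 1)
    (u7 : x7 = 0)
    (d8 : x8 = 0 ∨ x8 = 1)
    (d9 : x9 = 0 ∨ x9 = 1)
    (d10 : x10 = 0 ∨ x10 = 1)
    (d11 : x11 = 0 ∨ x11 = 1)
    (d12 : x12 = 0 ∨ x12 = 1)
    (d13 : x13 = 0 ∨ x13 = 1)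
    (d14 : x14 = 0 ∨ x14 = 1)
    (d15 : x15 = 0 ∨ x15 = 1)
    (d16 : x16 = 0 ∨ x16 = 1)
    (d17 : x17 = 0 ∨ x17 = 1)
    (d18 : x18 = 0 ∨ x18 = 1)
    (d19 : x19 = 0 ∨ x19 = 1)
    (u20 : x20 = 1)
    (d21 : x21 = 0 ∨ x21 = 1)
    (d22 : x22 = 0 ∨ x22 = 1)
    (d23 : x23 = 0 ∨ x23 = 1)
    (d24 : x24 = 0 ∨ x24 = 1)
    (d25 : x25 = 0 ∨ x25 = 1)
    (d26 : x26 = 0 ∨ x26 = 1)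
    (d27 : x27 = 0 ∨ x27 = 1)
    (d28 : x28 = 0 ∨ x28 = 1)
    (d29 : x29 = 0 ∨ x29 = 1)
    (d30 : x30 = 0 ∨ x30 = 1)
    (d31 : x31 = 0 ∨ x31 = 1)
    (d32 : x32 = 0 ∨ x32 = 1)
    (d33 : x33 = 0 ∨ x33 = 1)
    (d34 : x34 = 0 ∨ x34 = 1)
    (d35 : x35 = 0 ∨ x35 = 1)
    (d36 : x36 = 0 ∨ x36 = 1)
    (d37 : x37 = 0 ∨ x37 = 1)
    (d38 : x38 = 0 ∨ x38 = 1)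
    (d39 : x39 = 0 ∨ x39 = 1)
    (d40 : x40 = 0 ∨ x40 = 1)
    (d41 : x41 = 0 ∨ x41 = 1)
    (f0 : x2 = x0 + x1)
    (f1 : x5 = x3 * x4)
    (f2 : x8 = x6 + x7)
    (f3 : x5 = x9 * x4)
    (f4 : x10 = x9 + x4)
    (f5 : x5 = x11 * x4)
    (f6 : x12 = x11 + x4)
    (f7 : x14 = x7 + x13)
    (f8 : x5 = x15 * x4)
    (f9 : x16 = x15 + x4)
    (f10 : x5 = x17 * x18)
    (f11 : x14 = x17 + x18)
    (f12 : x20 = x17 + x19)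
    (f13 : x23 = x21 * x22)
    (f14 : x3 = x21 * x19)
    (f15 : x5 = x24 * x25)
    (f16 : x26 = x24 + x25)
    (f17 : x28 = x24 + x27)
    (f18 : x20 = x24 + x29)
    (f19 : x21 = x23 + x30)
    (f20 : x12 = x23 + x31)
    (f21 : x20 = x32 + x31)
    (f22 : x13 = x32 * x33)
    (f23 : x20 = x30 + x22)
    (f24 : x11 = x26 * x22)
    (f25 : x5 = x34 * x35)
    (f26 : x8 = x34 + x35)
    (f27 : x37 = x2 * x36)
    (f28 : x6 = x38 * x39)
    (f29 : x35 = x38 * x10)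
    (f30 : x1 = x38 * x28)
    (f31 : x37 = x38 * x16)
    (f32 : x20 = x40 + x27)
    (f33 : x6 = x40 * x29)
    (f34 : x1 = x41 * x22)
    (f35 : x27 = x41 * x27)
    : False := by
  rcases d3 with h3 | h3
  ·
    rcases d9 with h9 | h9
    ·
      rcases d10 with h10 | h10
      ·
        exact one_ne_zero (show (1:K) = 0 by linear_combination (-1:K) * f4 - (-1:K) * ((-1:K)) * u4 - (-1:K) * ((-1:K)) * h9 - (-1:K) * ((1:K)) * h10)
      ·
        rcases d11 with h11 | h11
        ·
          rcases d12 with h12 | h12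
          ·
            exact one_ne_zero (show (1:K) = 0 by linear_combination (-1:K) * f6 - (-1:K) * ((-1:K)) * u4 - (-1:K) * ((-1:K)) * h11 - (-1:K) * ((1:K)) * h12)
          ·
            rcases d15 with h15 | h15
            ·
              rcases d16 with h16 | h16
              ·
                exact one_ne_zero (show (1:K) = 0 by linear_combination (-1:K) * f9 - (-1:K) * ((-1:K)) * u4 - (-1:K) * ((-1:K)) * h15 - (-1:K) * ((1:K)) * h16)
              ·
                rcases d24 with h24 | h24
                ·
                  rcases d29 with h29 | h29
                  ·
                    exact one_ne_zero (show (1:K) = 0 by linear_combination (1:K) * f18 - (1:K) * ((1:K)) * u20 - (1:K) * ((-1:K)) * h24 - (1:K) * ((-1:K)) * h29)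
                  ·
                    rcases d23 with h23 | h23
                    ·
                      rcases d31 with h31 | h31
                      ·
                        exact one_ne_zero (show (1:K) = 0 by linear_combination (1:K) * f20 - (1:K) * ((1:K)) * h12 - (1:K) * ((-1:K)) * h23 - (1:K) * ((-1:K)) * h31)
                      ·
                        rcases d32 with h32 | h32
                        ·
                          rcases d13 with h13 | h13
                          ·
                            rcases d14 with h14 | h14
                            ·
                              rcases d27 with h27 | h27
                              ·
                                rcases d28 with h28 | h28
                                ·
                                  rcases d1 with h1 | h1
                                  ·
                                    rcases d2 with h2 | h2
                                    ·
                                      rcases d37 with h37 | h37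
                                      ·
                                        rcases d38 with h38 | h38
                                        ·
                                          rcases d6 with h6 | h6
                                          ·
                                            rcases d8 with h8 | h8
                                            ·
                                              rcases d35 with h35 | h35
                                              ·
                                                rcases d34 with h34 | h34
                                                ·
                                                  rcases d40 with h40 | h40
                                                  ·
                                                    exact one_ne_zero (show (1:K) = 0 by linear_combination (1:K) * f32 - (1:K) * ((1:K)) * u20 - (1:K) * ((-1:K)) * h27 - (1:K) * ((-1:K)) * h40)
                                                  ·
                                                    exact one_ne_zero (show (1:K) = 0 by linear_combination (-1:K) * f33 - (-1:K) * ((1:K)) * h6 - (-1:K) * ((-1)*x40) * h29 - (-1:K) * ((-1:K)) * h40)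
                                                ·
                                                  exact one_ne_zero (show (1:K) = 0 by linear_combination (-1:K) * f26 - (-1:K) * ((1:K)) * h8 - (-1:K) * ((-1:K)) * h34 - (-1:K) * ((-1:K)) * h35)
                                              ·
                                                exact one_ne_zero (show (1:K) = 0 by linear_combination (1:K) * f29 - (1:K) * ((-1)*x38) * h10 - (1:K) * ((1:K)) * h35 - (1:K) * ((-1:K)) * h38)
                                            ·
                                              exact one_ne_zero (show (1:K) = 0 by linear_combination (1:K) * f2 - (1:K) * ((-1:K)) * h6 - (1:K) * ((-1:K)) * u7 - (1:K) * ((1:K)) * h8)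
                                          ·
                                            exact one_ne_zero (show (1:K) = 0 by linear_combination (1:K) * f28 - (1:K) * ((1:K)) * h6 - (1:K) * ((-1)*x39) * h38)
                                        ·
                                          exact one_ne_zero (show (1:K) = 0 by linear_combination (-1:K) * f31 - (-1:K) * ((-1)*x38) * h16 - (-1:K) * ((1:K)) * h37 - (-1:K) * ((-1:K)) * h38)
                                      ·
                                        exact one_ne_zero (show (1:K) = 0 by linear_combination (1:K) * f27 - (1:K) * ((-1)*x36) * h2 - (1:K) * ((1:K)) * h37)
                                    ·
                                      exact one_ne_zero (show (1:K) = 0 by linear_combination (1:K) * f0 - (1:K) * ((-1:K)) * u0 - (1:K) * ((-1:K)) * h1 - (1:K) * ((1:K)) * h2)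
                                  ·
                                    exact one_ne_zero (show (1:K) = 0 by linear_combination (1:K) * f30 - (1:K) * ((1:K)) * h1 - (1:K) * ((-1)*x38) * h28)
                                ·
                                  exact one_ne_zero (show (1:K) = 0 by linear_combination (1:K) * f17 - (1:K) * ((-1:K)) * h24 - (1:K) * ((-1:K)) * h27 - (1:K) * ((1:K)) * h28)
                              ·
                                rcases d28 with h28 | h28
                                ·
                                  exact one_ne_zero (show (1:K) = 0 by linear_combination (-1:K) * f17 - (-1:K) * ((-1:K)) * h24 - (-1:K) * ((-1:K)) * h27 - (-1:K) * ((1:K)) * h28)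
                                ·
                                  rcases d40 with h40 | h40
                                  ·
                                    rcases d6 with h6 | h6
                                    ·
                                      rcases d8 with h8 | h8
                                      ·
                                        rcases d41 with h41 | h41
                                        ·
                                          exact one_ne_zero (show (1:K) = 0 by linear_combination (1:K) * f35 - (1:K) * ((1:K) + (-1)*x41) * h27 - (1:K) * ((-1:K)) * h41)
                                        ·
                                          rcases d38 with h38 | h38
                                          ·
                                            rcases d35 with h35 | h35
                                            ·
                                              rcases d34 with h34 | h34
                                              ·
                                                rcases d1 with h1 | h1
                                                ·
                                                  rcases d2 with h2 | h2
                                                  ·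
                                                    rcases d37 with h37 | h37
                                                    ·
                                                      rcases d22 with h22 | h22
                                                      ·
                                                        rcases d30 with h30 | h30
                                                        ·
                                                          exact one_ne_zero (show (1:K) = 0 by linear_combination (1:K) * f23 - (1:K) * ((1:K)) * u20 - (1:K) * ((-1:K)) * h22 - (1:K) * ((-1:K)) * h30)
                                                        ·
                                                          rcases d21 with h21 | h21
                                                          ·
                                                            exact one_ne_zero (show (1:K) = 0 by linear_combination (-1:K) * f19 - (-1:K) * ((1:K)) * h21 - (-1:K) * ((-1:K)) * h23 - (-1:K) * ((-1:K)) * h30)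
                                                          ·
                                                            rcases d19 with h19 | h19
                                                            ·
                                                              rcases d17 with h17 | h17
                                                              ·
                                                                exact one_ne_zero (show (1:K) = 0 by linear_combination (1:K) * f12 - (1:K) * ((-1:K)) * h17 - (1:K) * ((-1:K)) * h19 - (1:K) * ((1:K)) * u20)
                                                              ·
                                                                rcases d18 with h18 | h18
                                                                ·
                                                                  exact one_ne_zero (show (1:K) = 0 by linear_combination (-1:K) * f11 - (-1:K) * ((1:K)) * h14 - (-1:K) * ((-1:K)) * h17 - (-1:K) * ((-1:K)) * h18)
                                                                ·
                                                                  exact one_ne_zero (show (1:K) = 0 by linear_combination (-1:K) * f10 - (-1:K) * ((1:K)) * u5 - (-1:K) * ((-1)*x18) * h17 - (-1:K) * ((-1:K)) * h18)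
                                                            ·
                                                              exact one_ne_zero (show (1:K) = 0 by linear_combination (-1:K) * f14 - (-1:K) * ((1:K)) * h3 - (-1:K) * ((-1)*x21) * h19 - (-1:K) * ((-1:K)) * h21)
                                                      ·
                                                        exact one_ne_zero (show (1:K) = 0 by linear_combination (-1:K) * f34 - (-1:K) * ((1:K)) * h1 - (-1:K) * ((-1)*x41) * h22 - (-1:K) * ((-1:K)) * h41)
                                                    ·
                                                      exact one_ne_zero (show (1:K) = 0 by linear_combination (1:K) * f27 - (1:K) * ((-1)*x36) * h2 - (1:K) * ((1:K)) * h37)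
                                                  ·
                                                    exact one_ne_zero (show (1:K) = 0 by linear_combination (1:K) * f0 - (1:K) * ((-1:K)) * u0 - (1:K) * ((-1:K)) * h1 - (1:K) * ((1:K)) * h2)
                                                ·
                                                  exact one_ne_zero (show (1:K) = 0 by linear_combination (1:K) * f30 - (1:K) * ((1:K)) * h1 - (1:K) * ((-1)*x38) * h28 - (1:K) * ((-1:K)) * h38)
                                              ·
                                                exact one_ne_zero (show (1:K) = 0 by linear_combination (-1:K) * f26 - (-1:K) * ((1:K)) * h8 - (-1:K) * ((-1:K)) * h34 - (-1:K) * ((-1:K)) * h35)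
                                            ·
                                              exact one_ne_zero (show (1:K) = 0 by linear_combination (1:K) * f29 - (1:K) * ((-1)*x38) * h10 - (1:K) * ((1:K)) * h35 - (1:K) * ((-1:K)) * h38)
                                          ·
                                            rcases d39 with h39 | h39
                                            ·
                                              rcases d35 with h35 | h35
                                              ·
                                                exact one_ne_zero (show (1:K) = 0 by linear_combination (-1:K) * f29 - (-1:K) * ((-1)*x38) * h10 - (-1:K) * ((1:K)) * h35 - (-1:K) * ((-1:K)) * h38)
                                              ·
                                                rcases d34 with h34 | h34
                                                ·
                                                  exact one_ne_zero (show (1:K) = 0 by linear_combination (-1:K) * f26 - (-1:K) * ((1:K)) * h8 - (-1:K) * ((-1:K)) * h34 - (-1:K) * ((-1:K)) * h35)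
                                                ·
                                                  exact one_ne_zero (show (1:K) = 0 by linear_combination (-1:K) * f25 - (-1:K) * ((1:K)) * u5 - (-1:K) * ((-1)*x35) * h34 - (-1:K) * ((-1:K)) * h35)
                                            ·
                                              exact one_ne_zero (show (1:K) = 0 by linear_combination (-1:K) * f28 - (-1:K) * ((1:K)) * h6 - (-1:K) * ((-1)*x39) * h38 - (-1:K) * ((-1:K)) * h39)
                                      ·
                                        exact one_ne_zero (show (1:K) = 0 by linear_combination (1:K) * f2 - (1:K) * ((-1:K)) * h6 - (1:K) * ((-1:K)) * u7 - (1:K) * ((1:K)) * h8)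
                                    ·
                                      exact one_ne_zero (show (1:K) = 0 by linear_combination (1:K) * f33 - (1:K) * ((1:K)) * h6 - (1:K) * ((-1)*x40) * h29 - (1:K) * ((-1:K)) * h40)
                                  ·
                                    exact one_ne_zero (show (1:K) = 0 by linear_combination (-1:K) * f32 - (-1:K) * ((1:K)) * u20 - (-1:K) * ((-1:K)) * h27 - (-1:K) * ((-1:K)) * h40)
                            ·
                              exact one_ne_zero (show (1:K) = 0 by linear_combination (1:K) * f7 - (1:K) * ((-1:K)) * u7 - (1:K) * ((-1:K)) * h13 - (1:K) * ((1:K)) * h14)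
                          ·
                            exact one_ne_zero (show (1:K) = 0 by linear_combination (1:K) * f22 - (1:K) * ((1:K)) * h13 - (1:K) * ((-1)*x33) * h32)
                        ·
                          exact one_ne_zero (show (1:K) = 0 by linear_combination (-1:K) * f21 - (-1:K) * ((1:K)) * u20 - (-1:K) * ((-1:K)) * h31 - (-1:K) * ((-1:K)) * h32)
                    ·
                      rcases d21 with h21 | h21
                      ·
                        exact one_ne_zero (show (1:K) = 0 by linear_combination (1:K) * f13 - (1:K) * ((-1)*x22) * h21 - (1:K) * ((1:K)) * h23)
                      ·
                        rcases d22 with h22 | h22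
                        ·
                          exact one_ne_zero (show (1:K) = 0 by linear_combination (1:K) * f13 - (1:K) * ((-1)*x22) * h21 - (1:K) * ((-1:K)) * h22 - (1:K) * ((1:K)) * h23)
                        ·
                          rcases d19 with h19 | h19
                          ·
                            rcases d17 with h17 | h17
                            ·
                              exact one_ne_zero (show (1:K) = 0 by linear_combination (1:K) * f12 - (1:K) * ((-1:K)) * h17 - (1:K) * ((-1:K)) * h19 - (1:K) * ((1:K)) * u20)
                            ·
                              rcases d18 with h18 | h18
                              ·
                                rcases d14 with h14 | h14
                                ·
                                  exact one_ne_zero (show (1:K) = 0 by linear_combination (-1:K) * f11 - (-1:K) * ((1:K)) * h14 - (-1:K) * ((-1:K)) * h17 - (-1:K) * ((-1:K)) * h18)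
                                ·
                                  rcases d13 with h13 | h13
                                  ·
                                    exact one_ne_zero (show (1:K) = 0 by linear_combination (1:K) * f7 - (1:K) * ((-1:K)) * u7 - (1:K) * ((-1:K)) * h13 - (1:K) * ((1:K)) * h14)
                                  ·
                                    rcases d30 with h30 | h30
                                    ·
                                      rcases d31 with h31 | h31
                                      ·
                                        rcases d32 with h32 | h32
                                        ·
                                          exact one_ne_zero (show (1:K) = 0 by linear_combination (1:K) * f21 - (1:K) * ((1:K)) * u20 - (1:K) * ((-1:K)) * h31 - (1:K) * ((-1:K)) * h32)
                                        ·
                                          rcases d33 with h33 | h33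
                                          ·
                                            exact one_ne_zero (show (1:K) = 0 by linear_combination (1:K) * f22 - (1:K) * ((1:K)) * h13 - (1:K) * ((-1)*x33) * h32 - (1:K) * ((-1:K)) * h33)
                                          ·
                                            rcases d26 with h26 | h26
                                            ·
                                              rcases d25 with h25 | h25
                                              ·
                                                rcases d27 with h27 | h27
                                                ·
                                                  rcases d28 with h28 | h28
                                                  ·
                                                    rcases d1 with h1 | h1
                                                    ·
                                                      rcases d2 with h2 | h2
                                                      ·
                                                        rcases d37 with h37 | h37
                                                        ·
                                                          rcases d38 with h38 | h38
                                                          ·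
                                                            rcases d6 with h6 | h6
                                                            ·
                                                              rcases d8 with h8 | h8
                                                              ·
                                                                rcases d35 with h35 | h35
                                                                ·
                                                                  rcases d34 with h34 | h34
                                                                  ·
                                                                    rcases d40 with h40 | h40
                                                                    ·
                                                                      exact one_ne_zero (show (1:K) = 0 by linear_combination (1:K) * f32 - (1:K) * ((1:K)) * u20 - (1:K) * ((-1:K)) * h27 - (1:K) * ((-1:K)) * h40)
                                                                    ·
                                                                      exact one_ne_zero (show (1:K) = 0 by linear_combination (-1:K) * f33 - (-1:K) * ((1:K)) * h6 - (-1:K) * ((-1)*x40) * h29 - (-1:K) * ((-1:K)) * h40)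
                                                                  ·
                                                                    exact one_ne_zero (show (1:K) = 0 by linear_combination (-1:K) * f26 - (-1:K) * ((1:K)) * h8 - (-1:K) * ((-1:K)) * h34 - (-1:K) * ((-1:K)) * h35)
                                                                ·
                                                                  exact one_ne_zero (show (1:K) = 0 by linear_combination (1:K) * f29 - (1:K) * ((-1)*x38) * h10 - (1:K) * ((1:K)) * h35 - (1:K) * ((-1:K)) * h38)
                                                              ·
                                                                exact one_ne_zero (show (1:K) = 0 by linear_combination (1:K) * f2 - (1:K) * ((-1:K)) * h6 - (1:K) * ((-1:K)) * u7 - (1:K) * ((1:K)) * h8)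
                                                            ·
                                                              exact one_ne_zero (show (1:K) = 0 by linear_combination (1:K) * f28 - (1:K) * ((1:K)) * h6 - (1:K) * ((-1)*x39) * h38)
                                                          ·
                                                            exact one_ne_zero (show (1:K) = 0 by linear_combination (-1:K) * f31 - (-1:K) * ((-1)*x38) * h16 - (-1:K) * ((1:K)) * h37 - (-1:K) * ((-1:K)) * h38)
                                                        ·
                                                          exact one_ne_zero (show (1:K) = 0 by linear_combination (1:K) * f27 - (1:K) * ((-1)*x36) * h2 - (1:K) * ((1:K)) * h37)
                                                      ·
                                                        exact one_ne_zero (show (1:K) = 0 by linear_combination (1:K) * f0 - (1:K) * ((-1:K)) * u0 - (1:K) * ((-1:K)) * h1 - (1:K) * ((1:K)) * h2)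
                                                    ·
                                                      exact one_ne_zero (show (1:K) = 0 by linear_combination (1:K) * f30 - (1:K) * ((1:K)) * h1 - (1:K) * ((-1)*x38) * h28)
                                                  ·
                                                    exact one_ne_zero (show (1:K) = 0 by linear_combination (1:K) * f17 - (1:K) * ((-1:K)) * h24 - (1:K) * ((-1:K)) * h27 - (1:K) * ((1:K)) * h28)
                                                ·
                                                  rcases d28 with h28 | h28
                                                  ·
                                                    exact one_ne_zero (show (1:K) = 0 by linear_combination (-1:K) * f17 - (-1:K) * ((-1:K)) * h24 - (-1:K) * ((-1:K)) * h27 - (-1:K) * ((1:K)) * h28)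
                                                  ·
                                                    rcases d40 with h40 | h40
                                                    ·
                                                      rcases d6 with h6 | h6
                                                      ·
                                                        rcases d8 with h8 | h8
                                                        ·
                                                          rcases d41 with h41 | h41
                                                          ·
                                                            exact one_ne_zero (show (1:K) = 0 by linear_combination (1:K) * f35 - (1:K) * ((1:K) + (-1)*x41) * h27 - (1:K) * ((-1:K)) * h41)
                                                          ·
                                                            rcases d1 with h1 | h1
                                                            ·
                                                              exact one_ne_zero (show (1:K) = 0 by linear_combination (-1:K) * f34 - (-1:K) * ((1:K)) * h1 - (-1:K) * ((-1)*x41) * h22 - (-1:K) * ((-1:K)) * h41)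
                                                            ·
                                                              rcases d2 with h2 | h2
                                                              ·
                                                                exact one_ne_zero (show (1:K) = 0 by linear_combination (-1:K) * f0 - (-1:K) * ((-1:K)) * u0 - (-1:K) * ((-1:K)) * h1 - (-1:K) * ((1:K)) * h2)
                                                              ·
                                                                rcases d38 with h38 | h38
                                                                ·
                                                                  exact one_ne_zero (show (1:K) = 0 by linear_combination (1:K) * f30 - (1:K) * ((1:K)) * h1 - (1:K) * ((-1)*x38) * h28 - (1:K) * ((-1:K)) * h38)
                                                                ·
                                                                  rcases d39 with h39 | h39
                                                                  ·
                                                                    rcases d35 with h35 | h35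
                                                                    ·
                                                                      exact one_ne_zero (show (1:K) = 0 by linear_combination (-1:K) * f29 - (-1:K) * ((-1)*x38) * h10 - (-1:K) * ((1:K)) * h35 - (-1:K) * ((-1:K)) * h38)
                                                                    ·
                                                                      rcases d34 with h34 | h34
                                                                      ·
                                                                        exact one_ne_zero (show (1:K) = 0 by linear_combination (-1:K) * f26 - (-1:K) * ((1:K)) * h8 - (-1:K) * ((-1:K)) * h34 - (-1:K) * ((-1:K)) * h35)
                                                                      ·
                                                                        exact one_ne_zero (show (1:K) = 0 by linear_combination (-1:K) * f25 - (-1:K) * ((1:K)) * u5 - (-1:K) * ((-1)*x35) * h34 - (-1:K) * ((-1:K)) * h35)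
                                                                  ·
                                                                    exact one_ne_zero (show (1:K) = 0 by linear_combination (-1:K) * f28 - (-1:K) * ((1:K)) * h6 - (-1:K) * ((-1)*x39) * h38 - (-1:K) * ((-1:K)) * h39)
                                                        ·
                                                          exact one_ne_zero (show (1:K) = 0 by linear_combination (1:K) * f2 - (1:K) * ((-1:K)) * h6 - (1:K) * ((-1:K)) * u7 - (1:K) * ((1:K)) * h8)
                                                      ·
                                                        exact one_ne_zero (show (1:K) = 0 by linear_combination (1:K) * f33 - (1:K) * ((1:K)) * h6 - (1:K) * ((-1)*x40) * h29 - (1:K) * ((-1:K)) * h40)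
                                                    ·
                                                      exact one_ne_zero (show (1:K) = 0 by linear_combination (-1:K) * f32 - (-1:K) * ((1:K)) * u20 - (-1:K) * ((-1:K)) * h27 - (-1:K) * ((-1:K)) * h40)
                                              ·
                                                exact one_ne_zero (show (1:K) = 0 by linear_combination (-1:K) * f16 - (-1:K) * ((-1:K)) * h24 - (-1:K) * ((-1:K)) * h25 - (-1:K) * ((1:K)) * h26)
                                            ·
                                              exact one_ne_zero (show (1:K) = 0 by linear_combination (-1:K) * f24 - (-1:K) * ((1:K)) * h11 - (-1:K) * ((-1)*x26) * h22 - (-1:K) * ((-1:K)) * h26)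
                                      ·
                                        exact one_ne_zero (show (1:K) = 0 by linear_combination (-1:K) * f20 - (-1:K) * ((1:K)) * h12 - (-1:K) * ((-1:K)) * h23 - (-1:K) * ((-1:K)) * h31)
                                    ·
                                      exact one_ne_zero (show (1:K) = 0 by linear_combination (-1:K) * f19 - (-1:K) * ((1:K)) * h21 - (-1:K) * ((-1:K)) * h23 - (-1:K) * ((-1:K)) * h30)
                              ·
                                exact one_ne_zero (show (1:K) = 0 by linear_combination (-1:K) * f10 - (-1:K) * ((1:K)) * u5 - (-1:K) * ((-1)*x18) * h17 - (-1:K) * ((-1:K)) * h18)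
                          ·
                            exact one_ne_zero (show (1:K) = 0 by linear_combination (-1:K) * f14 - (-1:K) * ((1:K)) * h3 - (-1:K) * ((-1)*x21) * h19 - (-1:K) * ((-1:K)) * h21)
                ·
                  rcases d25 with h25 | h25
                  ·
                    rcases d26 with h26 | h26
                    ·
                      exact one_ne_zero (show (1:K) = 0 by linear_combination (-1:K) * f16 - (-1:K) * ((-1:K)) * h24 - (-1:K) * ((-1:K)) * h25 - (-1:K) * ((1:K)) * h26)
                    ·
                      rcases d29 with h29 | h29
                      ·
                        rcases d22 with h22 | h22
                        ·
                          rcases d23 with h23 | h23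
                          ·
                            rcases d31 with h31 | h31
                            ·
                              exact one_ne_zero (show (1:K) = 0 by linear_combination (1:K) * f20 - (1:K) * ((1:K)) * h12 - (1:K) * ((-1:K)) * h23 - (1:K) * ((-1:K)) * h31)
                            ·
                              rcases d32 with h32 | h32
                              ·
                                rcases d13 with h13 | h13
                                ·
                                  rcases d14 with h14 | h14
                                  ·
                                    rcases d30 with h30 | h30
                                    ·
                                      exact one_ne_zero (show (1:K) = 0 by linear_combination (1:K) * f23 - (1:K) * ((1:K)) * u20 - (1:K) * ((-1:K)) * h22 - (1:K) * ((-1:K)) * h30)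
                                    ·
                                      rcases d21 with h21 | h21
                                      ·
                                        exact one_ne_zero (show (1:K) = 0 by linear_combination (-1:K) * f19 - (-1:K) * ((1:K)) * h21 - (-1:K) * ((-1:K)) * h23 - (-1:K) * ((-1:K)) * h30)
                                      ·
                                        rcases d19 with h19 | h19
                                        ·
                                          rcases d17 with h17 | h17
                                          ·
                                            exact one_ne_zero (show (1:K) = 0 by linear_combination (1:K) * f12 - (1:K) * ((-1:K)) * h17 - (1:K) * ((-1:K)) * h19 - (1:K) * ((1:K)) * u20)
                                          ·
                                            rcases d18 with h18 | h18
                                            ·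
                                              exact one_ne_zero (show (1:K) = 0 by linear_combination (-1:K) * f11 - (-1:K) * ((1:K)) * h14 - (-1:K) * ((-1:K)) * h17 - (-1:K) * ((-1:K)) * h18)
                                            ·
                                              exact one_ne_zero (show (1:K) = 0 by linear_combination (-1:K) * f10 - (-1:K) * ((1:K)) * u5 - (-1:K) * ((-1)*x18) * h17 - (-1:K) * ((-1:K)) * h18)
                                        ·
                                          exact one_ne_zero (show (1:K) = 0 by linear_combination (-1:K) * f14 - (-1:K) * ((1:K)) * h3 - (-1:K) * ((-1)*x21) * h19 - (-1:K) * ((-1:K)) * h21)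
                                  ·
                                    exact one_ne_zero (show (1:K) = 0 by linear_combination (1:K) * f7 - (1:K) * ((-1:K)) * u7 - (1:K) * ((-1:K)) * h13 - (1:K) * ((1:K)) * h14)
                                ·
                                  exact one_ne_zero (show (1:K) = 0 by linear_combination (1:K) * f22 - (1:K) * ((1:K)) * h13 - (1:K) * ((-1)*x33) * h32)
                              ·
                                exact one_ne_zero (show (1:K) = 0 by linear_combination (-1:K) * f21 - (-1:K) * ((1:K)) * u20 - (-1:K) * ((-1:K)) * h31 - (-1:K) * ((-1:K)) * h32)
                          ·
                            exact one_ne_zero (show (1:K) = 0 by linear_combination (1:K) * f13 - (1:K) * ((-1)*x21) * h22 - (1:K) * ((1:K)) * h23)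
                        ·
                          exact one_ne_zero (show (1:K) = 0 by linear_combination (-1:K) * f24 - (-1:K) * ((1:K)) * h11 - (-1:K) * ((-1)*x26) * h22 - (-1:K) * ((-1:K)) * h26)
                      ·
                        exact one_ne_zero (show (1:K) = 0 by linear_combination (-1:K) * f18 - (-1:K) * ((1:K)) * u20 - (-1:K) * ((-1:K)) * h24 - (-1:K) * ((-1:K)) * h29)
                  ·
                    exact one_ne_zero (show (1:K) = 0 by linear_combination (-1:K) * f15 - (-1:K) * ((1:K)) * u5 - (-1:K) * ((-1)*x25) * h24 - (-1:K) * ((-1:K)) * h25)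
            ·
              exact one_ne_zero (show (1:K) = 0 by linear_combination (-1:K) * f8 - (-1:K) * ((-1)*x15) * u4 - (-1:K) * ((1:K)) * u5 - (-1:K) * ((-1:K)) * h15)
        ·
          exact one_ne_zero (show (1:K) = 0 by linear_combination (-1:K) * f5 - (-1:K) * ((-1)*x11) * u4 - (-1:K) * ((1:K)) * u5 - (-1:K) * ((-1:K)) * h11)
    ·
      exact one_ne_zero (show (1:K) = 0 by linear_combination (-1:K) * f3 - (-1:K) * ((-1)*x9) * u4 - (-1:K) * ((1:K)) * u5 - (-1:K) * ((-1:K)) * h9)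
  ·
    exact one_ne_zero (show (1:K) = 0 by linear_combination (-1:K) * f1 - (-1:K) * ((-1)*x4) * h3 - (-1:K) * ((-1:K)) * u4 - (-1:K) * ((1:K)) * u5)

theorem blockCon (M K : Type) [Ring M] [CommRing K] [IsDomain K] (v : M → K)
    (hm : ∀ a b : M, a * b = b * a → v (a*b) = v a * v b)
    (hadd : ∀ a b : M, a * b = b * a → v (a+b) = v a + v b)
    (e : Fin 3 → Fin 3 → M)
    (emul : ∀ a b c d : Fin 3, e a b * e c d = if b = c then e a d else 0)
    (h00 : v (e 0 0) = 1) (h11 : v (e 1 1) = 0) (h22 : v (e 2 2) = 0)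
    (hI : v (e 0 0 + e 1 1 + e 2 2) = 1) (hz : v (0 : M) = 0) : False := by
  have sq : ∀ x : K, x * x = x → x = 0 ∨ x = 1 := by
    intro x h
    rcases mul_eq_zero.1 (show x * (x - 1) = 0 by ring_nf; linear_combination h) with h'|h'
    · exact Or.inl h'
    · exact Or.inr (by linear_combination h')
  have idm1 : (e 1 0 + e 1 1) * (e 1 0 + e 1 1) = (e 1 0 + e 1 1) := by simp only [mul_add, add_mul, mul_sub, sub_mul, neg_mul, mul_neg, neg_neg, emul]; try simp; try abel
  have d1 : v (e 1 0 + e 1 1) = 0 ∨ v (e 1 0 + e 1 1) = 1 := sq _ (by rw [← hm _ _ rfl, idm1])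
  have idm2 : (e 1 0 + e 1 1 + e 2 2) * (e 1 0 + e 1 1 + e 2 2) = (e 1 0 + e 1 1 + e 2 2) := by simp only [mul_add, add_mul, mul_sub, sub_mul, neg_mul, mul_neg, neg_neg, emul]; try simp; try abel
  have d2 : v (e 1 0 + e 1 1 + e 2 2) = 0 ∨ v (e 1 0 + e 1 1 + e 2 2) = 1 := sq _ (by rw [← hm _ _ rfl, idm2])
  have idm3 : (e 2 1 + e 2 2) * (e 2 1 + e 2 2) = (e 2 1 + e 2 2) := by simp only [mul_add, add_mul, mul_sub, sub_mul, neg_mul, mul_neg, neg_neg, emul]; try simp; try abel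
  have d3 : v (e 2 1 + e 2 2) = 0 ∨ v (e 2 1 + e 2 2) = 1 := sq _ (by rw [← hm _ _ rfl, idm3])
  have idm6 : (e 2 0 + e 2 2) * (e 2 0 + e 2 2) = (e 2 0 + e 2 2) := by simp only [mul_add, add_mul, mul_sub, sub_mul, neg_mul, mul_neg, neg_neg, emul]; try simp; try abel
  have d6 : v (e 2 0 + e 2 2) = 0 ∨ v (e 2 0 + e 2 2) = 1 := sq _ (by rw [← hm _ _ rfl, idm6])
  have idm8 : (e 1 1 + e 2 0 + e 2 2) * (e 1 1 + e 2 0 + e 2 2) = (e 1 1 + e 2 0 + e 2 2) := by simp only [mul_add, add_mul, mul_sub, sub_mul, neg_mul, mul_neg, neg_neg, emul]; try simp; try abel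
  have d8 : v (e 1 1 + e 2 0 + e 2 2) = 0 ∨ v (e 1 1 + e 2 0 + e 2 2) = 1 := sq _ (by rw [← hm _ _ rfl, idm8])
  have idm9 : (e 1 2 + e 2 2) * (e 1 2 + e 2 2) = (e 1 2 + e 2 2) := by simp only [mul_add, add_mul, mul_sub, sub_mul, neg_mul, mul_neg, neg_neg, emul]; try simp; try abel
  have d9 : v (e 1 2 + e 2 2) = 0 ∨ v (e 1 2 + e 2 2) = 1 := sq _ (by rw [← hm _ _ rfl, idm9])
  have idm10 : (e 0 0 + e 1 2 + e 2 2) * (e 0 0 + e 1 2 + e 2 2) = (e 0 0 + e 1 2 + e 2 2) := by simp only [mul_add, add_mul, mul_sub, sub_mul, neg_mul, mul_neg, neg_neg, emul]; try simp; try abel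
  have d10 : v (e 0 0 + e 1 2 + e 2 2) = 0 ∨ v (e 0 0 + e 1 2 + e 2 2) = 1 := sq _ (by rw [← hm _ _ rfl, idm10])
  have idm11 : (e 1 1 - e 1 2) * (e 1 1 - e 1 2) = (e 1 1 - e 1 2) := by simp only [mul_add, add_mul, mul_sub, sub_mul, neg_mul, mul_neg, neg_neg, emul]; try simp; try abel
  have d11 : v (e 1 1 - e 1 2) = 0 ∨ v (e 1 1 - e 1 2) = 1 := sq _ (by rw [← hm _ _ rfl, idm11])
  have idm12 : (e 0 0 + e 1 1 - e 1 2) * (e 0 0 + e 1 1 - e 1 2) = (e 0 0 + e 1 1 - e 1 2) := by simp only [mul_add, add_mul, mul_sub, sub_mul, neg_mul, mul_neg, neg_neg, emul]; try simp; try abel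
  have d12 : v (e 0 0 + e 1 1 - e 1 2) = 0 ∨ v (e 0 0 + e 1 1 - e 1 2) = 1 := sq _ (by rw [← hm _ _ rfl, idm12])
  have idm13 : (e 0 2 + e 2 2) * (e 0 2 + e 2 2) = (e 0 2 + e 2 2) := by simp only [mul_add, add_mul, mul_sub, sub_mul, neg_mul, mul_neg, neg_neg, emul]; try simp; try abel
  have d13 : v (e 0 2 + e 2 2) = 0 ∨ v (e 0 2 + e 2 2) = 1 := sq _ (by rw [← hm _ _ rfl, idm13])
  have idm14 : (e 0 2 + e 1 1 + e 2 2) * (e 0 2 + e 1 1 + e 2 2) = (e 0 2 + e 1 1 + e 2 2) := by simp only [mul_add, add_mul, mul_sub, sub_mul, neg_mul, mul_neg, neg_neg, emul]; try simp; try abel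
  have d14 : v (e 0 2 + e 1 1 + e 2 2) = 0 ∨ v (e 0 2 + e 1 1 + e 2 2) = 1 := sq _ (by rw [← hm _ _ rfl, idm14])
  have idm15 : (e 1 1 + e 2 1) * (e 1 1 + e 2 1) = (e 1 1 + e 2 1) := by simp only [mul_add, add_mul, mul_sub, sub_mul, neg_mul, mul_neg, neg_neg, emul]; try simp; try abel
  have d15 : v (e 1 1 + e 2 1) = 0 ∨ v (e 1 1 + e 2 1) = 1 := sq _ (by rw [← hm _ _ rfl, idm15])
  have idm16 : (e 0 0 + e 1 1 + e 2 1) * (e 0 0 + e 1 1 + e 2 1) = (e 0 0 + e 1 1 + e 2 1) := by simp only [mul_add, add_mul, mul_sub, sub_mul, neg_mul, mul_neg, neg_neg, emul]; try simp; try abel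
  have d16 : v (e 0 0 + e 1 1 + e 2 1) = 0 ∨ v (e 0 0 + e 1 1 + e 2 1) = 1 := sq _ (by rw [← hm _ _ rfl, idm16])
  have idm17 : (-e 0 1 + e 1 1 - e 2 1) * (-e 0 1 + e 1 1 - e 2 1) = (-e 0 1 + e 1 1 - e 2 1) := by simp only [mul_add, add_mul, mul_sub, sub_mul, neg_mul, mul_neg, neg_neg, emul]; try simp; try abel
  have d17 : v (-e 0 1 + e 1 1 - e 2 1) = 0 ∨ v (-e 0 1 + e 1 1 - e 2 1) = 1 := sq _ (by rw [← hm _ _ rfl, idm17])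
  have idm18 : (e 0 1 + e 0 2 + e 2 1 + e 2 2) * (e 0 1 + e 0 2 + e 2 1 + e 2 2) = (e 0 1 + e 0 2 + e 2 1 + e 2 2) := by simp only [mul_add, add_mul, mul_sub, sub_mul, neg_mul, mul_neg, neg_neg, emul]; try simp; try abel
  have d18 : v (e 0 1 + e 0 2 + e 2 1 + e 2 2) = 0 ∨ v (e 0 1 + e 0 2 + e 2 1 + e 2 2) = 1 := sq _ (by rw [← hm _ _ rfl, idm18])
  have idm19 : (e 0 0 + e 0 1 + e 2 1 + e 2 2) * (e 0 0 + e 0 1 + e 2 1 + e 2 2) = (e 0 0 + e 0 1 + e 2 1 + e 2 2) := by simp only [mul_add, add_mul, mul_sub, sub_mul, neg_mul, mul_neg, neg_neg, emul]; try simp; try abel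
  have d19 : v (e 0 0 + e 0 1 + e 2 1 + e 2 2) = 0 ∨ v (e 0 0 + e 0 1 + e 2 1 + e 2 2) = 1 := sq _ (by rw [← hm _ _ rfl, idm19])
  have idm21 : (-e 0 1 + e 1 1 + e 2 2) * (-e 0 1 + e 1 1 + e 2 2) = (-e 0 1 + e 1 1 + e 2 2) := by simp only [mul_add, add_mul, mul_sub, sub_mul, neg_mul, mul_neg, neg_neg, emul]; try simp; try abel
  have d21 : v (-e 0 1 + e 1 1 + e 2 2) = 0 ∨ v (-e 0 1 + e 1 1 + e 2 2) = 1 := sq _ (by rw [← hm _ _ rfl, idm21])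
  have idm22 : (e 0 0 + e 0 2 + e 1 1 - e 1 2) * (e 0 0 + e 0 2 + e 1 1 - e 1 2) = (e 0 0 + e 0 2 + e 1 1 - e 1 2) := by simp only [mul_add, add_mul, mul_sub, sub_mul, neg_mul, mul_neg, neg_neg, emul]; try simp; try abel
  have d22 : v (e 0 0 + e 0 2 + e 1 1 - e 1 2) = 0 ∨ v (e 0 0 + e 0 2 + e 1 1 - e 1 2) = 1 := sq _ (by rw [← hm _ _ rfl, idm22])
  have idm23 : (-e 0 1 + e 0 2 + e 1 1 - e 1 2) * (-e 0 1 + e 0 2 + e 1 1 - e 1 2) = (-e 0 1 + e 0 2 + e 1 1 - e 1 2) := by simp only [mul_add, add_mul, mul_sub, sub_mul, neg_mul, mul_neg, neg_neg, emul]; try simp; try abel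
  have d23 : v (-e 0 1 + e 0 2 + e 1 1 - e 1 2) = 0 ∨ v (-e 0 1 + e 0 2 + e 1 1 - e 1 2) = 1 := sq _ (by rw [← hm _ _ rfl, idm23])
  have idm24 : (-e 0 1 + e 1 1 + e 2 1) * (-e 0 1 + e 1 1 + e 2 1) = (-e 0 1 + e 1 1 + e 2 1) := by simp only [mul_add, add_mul, mul_sub, sub_mul, neg_mul, mul_neg, neg_neg, emul]; try simp; try abel
  have d24 : v (-e 0 1 + e 1 1 + e 2 1) = 0 ∨ v (-e 0 1 + e 1 1 + e 2 1) = 1 := sq _ (by rw [← hm _ _ rfl, idm24])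
  have idm25 : (e 0 1 - e 0 2 - e 2 1 + e 2 2) * (e 0 1 - e 0 2 - e 2 1 + e 2 2) = (e 0 1 - e 0 2 - e 2 1 + e 2 2) := by simp only [mul_add, add_mul, mul_sub, sub_mul, neg_mul, mul_neg, neg_neg, emul]; try simp; try abel
  have d25 : v (e 0 1 - e 0 2 - e 2 1 + e 2 2) = 0 ∨ v (e 0 1 - e 0 2 - e 2 1 + e 2 2) = 1 := sq _ (by rw [← hm _ _ rfl, idm25])
  have idm26 : (-e 0 2 + e 1 1 + e 2 2) * (-e 0 2 + e 1 1 + e 2 2) = (-e 0 2 + e 1 1 + e 2 2) := by simp only [mul_add, add_mul, mul_sub, sub_mul, neg_mul, mul_neg, neg_neg, emul]; try simp; try abel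
  have d26 : v (-e 0 2 + e 1 1 + e 2 2) = 0 ∨ v (-e 0 2 + e 1 1 + e 2 2) = 1 := sq _ (by rw [← hm _ _ rfl, idm26])
  have idm27 : (e 0 0 + e 0 1 - e 2 0 - e 2 1) * (e 0 0 + e 0 1 - e 2 0 - e 2 1) = (e 0 0 + e 0 1 - e 2 0 - e 2 1) := by simp only [mul_add, add_mul, mul_sub, sub_mul, neg_mul, mul_neg, neg_neg, emul]; try simp; try abel
  have d27 : v (e 0 0 + e 0 1 - e 2 0 - e 2 1) = 0 ∨ v (e 0 0 + e 0 1 - e 2 0 - e 2 1) = 1 := sq _ (by rw [← hm _ _ rfl, idm27])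
  have idm28 : (e 0 0 + e 1 1 - e 2 0) * (e 0 0 + e 1 1 - e 2 0) = (e 0 0 + e 1 1 - e 2 0) := by simp only [mul_add, add_mul, mul_sub, sub_mul, neg_mul, mul_neg, neg_neg, emul]; try simp; try abel
  have d28 : v (e 0 0 + e 1 1 - e 2 0) = 0 ∨ v (e 0 0 + e 1 1 - e 2 0) = 1 := sq _ (by rw [← hm _ _ rfl, idm28])
  have idm29 : (e 0 0 + e 0 1 - e 2 1 + e 2 2) * (e 0 0 + e 0 1 - e 2 1 + e 2 2) = (e 0 0 + e 0 1 - e 2 1 + e 2 2) := by simp only [mul_add, add_mul, mul_sub, sub_mul, neg_mul, mul_neg, neg_neg, emul]; try simp; try abel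
  have d29 : v (e 0 0 + e 0 1 - e 2 1 + e 2 2) = 0 ∨ v (e 0 0 + e 0 1 - e 2 1 + e 2 2) = 1 := sq _ (by rw [← hm _ _ rfl, idm29])
  have idm30 : (-e 0 2 + e 1 2 + e 2 2) * (-e 0 2 + e 1 2 + e 2 2) = (-e 0 2 + e 1 2 + e 2 2) := by simp only [mul_add, add_mul, mul_sub, sub_mul, neg_mul, mul_neg, neg_neg, emul]; try simp; try abel
  have d30 : v (-e 0 2 + e 1 2 + e 2 2) = 0 ∨ v (-e 0 2 + e 1 2 + e 2 2) = 1 := sq _ (by rw [← hm _ _ rfl, idm30])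
  have idm31 : (e 0 0 + e 0 1 - e 0 2) * (e 0 0 + e 0 1 - e 0 2) = (e 0 0 + e 0 1 - e 0 2) := by simp only [mul_add, add_mul, mul_sub, sub_mul, neg_mul, mul_neg, neg_neg, emul]; try simp; try abel
  have d31 : v (e 0 0 + e 0 1 - e 0 2) = 0 ∨ v (e 0 0 + e 0 1 - e 0 2) = 1 := sq _ (by rw [← hm _ _ rfl, idm31])
  have idm32 : (-e 0 1 + e 0 2 + e 1 1 + e 2 2) * (-e 0 1 + e 0 2 + e 1 1 + e 2 2) = (-e 0 1 + e 0 2 + e 1 1 + e 2 2) := by simp only [mul_add, add_mul, mul_sub, sub_mul, neg_mul, mul_neg, neg_neg, emul]; try simp; try abel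
  have d32 : v (-e 0 1 + e 0 2 + e 1 1 + e 2 2) = 0 ∨ v (-e 0 1 + e 0 2 + e 1 1 + e 2 2) = 1 := sq _ (by rw [← hm _ _ rfl, idm32])
  have idm33 : (e 0 0 + e 0 1 + e 2 2) * (e 0 0 + e 0 1 + e 2 2) = (e 0 0 + e 0 1 + e 2 2) := by simp only [mul_add, add_mul, mul_sub, sub_mul, neg_mul, mul_neg, neg_neg, emul]; try simp; try abel
  have d33 : v (e 0 0 + e 0 1 + e 2 2) = 0 ∨ v (e 0 0 + e 0 1 + e 2 2) = 1 := sq _ (by rw [← hm _ _ rfl, idm33])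
  have idm34 : (-e 1 0 + e 1 1 - e 1 2) * (-e 1 0 + e 1 1 - e 1 2) = (-e 1 0 + e 1 1 - e 1 2) := by simp only [mul_add, add_mul, mul_sub, sub_mul, neg_mul, mul_neg, neg_neg, emul]; try simp; try abel
  have d34 : v (-e 1 0 + e 1 1 - e 1 2) = 0 ∨ v (-e 1 0 + e 1 1 - e 1 2) = 1 := sq _ (by rw [← hm _ _ rfl, idm34])
  have idm35 : (e 1 0 + e 1 2 + e 2 0 + e 2 2) * (e 1 0 + e 1 2 + e 2 0 + e 2 2) = (e 1 0 + e 1 2 + e 2 0 + e 2 2) := by simp only [mul_add, add_mul, mul_sub, sub_mul, neg_mul, mul_neg, neg_neg, emul]; try simp; try abel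
  have d35 : v (e 1 0 + e 1 2 + e 2 0 + e 2 2) = 0 ∨ v (e 1 0 + e 1 2 + e 2 0 + e 2 2) = 1 := sq _ (by rw [← hm _ _ rfl, idm35])
  have idm36 : (e 0 0 + e 1 1 + e 2 0 + e 2 1) * (e 0 0 + e 1 1 + e 2 0 + e 2 1) = (e 0 0 + e 1 1 + e 2 0 + e 2 1) := by simp only [mul_add, add_mul, mul_sub, sub_mul, neg_mul, mul_neg, neg_neg, emul]; try simp; try abel
  have d36 : v (e 0 0 + e 1 1 + e 2 0 + e 2 1) = 0 ∨ v (e 0 0 + e 1 1 + e 2 0 + e 2 1) = 1 := sq _ (by rw [← hm _ _ rfl, idm36])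
  have idm37 : (e 1 0 + e 1 1 + e 2 0 + e 2 1) * (e 1 0 + e 1 1 + e 2 0 + e 2 1) = (e 1 0 + e 1 1 + e 2 0 + e 2 1) := by simp only [mul_add, add_mul, mul_sub, sub_mul, neg_mul, mul_neg, neg_neg, emul]; try simp; try abel
  have d37 : v (e 1 0 + e 1 1 + e 2 0 + e 2 1) = 0 ∨ v (e 1 0 + e 1 1 + e 2 0 + e 2 1) = 1 := sq _ (by rw [← hm _ _ rfl, idm37])
  have idm38 : (e 1 0 + e 1 1 + e 2 0 + e 2 2) * (e 1 0 + e 1 1 + e 2 0 + e 2 2) = (e 1 0 + e 1 1 + e 2 0 + e 2 2) := by simp only [mul_add, add_mul, mul_sub, sub_mul, neg_mul, mul_neg, neg_neg, emul]; try simp; try abel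
  have d38 : v (e 1 0 + e 1 1 + e 2 0 + e 2 2) = 0 ∨ v (e 1 0 + e 1 1 + e 2 0 + e 2 2) = 1 := sq _ (by rw [← hm _ _ rfl, idm38])
  have idm39 : (e 0 0 - e 1 0 + e 2 2) * (e 0 0 - e 1 0 + e 2 2) = (e 0 0 - e 1 0 + e 2 2) := by simp only [mul_add, add_mul, mul_sub, sub_mul, neg_mul, mul_neg, neg_neg, emul]; try simp; try abel
  have d39 : v (e 0 0 - e 1 0 + e 2 2) = 0 ∨ v (e 0 0 - e 1 0 + e 2 2) = 1 := sq _ (by rw [← hm _ _ rfl, idm39])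
  have idm40 : (-e 0 1 + e 1 1 + e 2 0 + e 2 1 + e 2 2) * (-e 0 1 + e 1 1 + e 2 0 + e 2 1 + e 2 2) = (-e 0 1 + e 1 1 + e 2 0 + e 2 1 + e 2 2) := by simp only [mul_add, add_mul, mul_sub, sub_mul, neg_mul, mul_neg, neg_neg, emul]; try simp; try abel
  have d40 : v (-e 0 1 + e 1 1 + e 2 0 + e 2 1 + e 2 2) = 0 ∨ v (-e 0 1 + e 1 1 + e 2 0 + e 2 1 + e 2 2) = 1 := sq _ (by rw [← hm _ _ rfl, idm40])
  have idm41 : (-e 0 2 + e 1 0 + e 1 1 + e 1 2 + e 2 2) * (-e 0 2 + e 1 0 + e 1 1 + e 1 2 + e 2 2) = (-e 0 2 + e 1 0 + e 1 1 + e 1 2 + e 2 2) := by simp only [mul_add, add_mul, mul_sub, sub_mul, neg_mul, mul_neg, neg_neg, emul]; try simp; try abel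
  have d41 : v (-e 0 2 + e 1 0 + e 1 1 + e 1 2 + e 2 2) = 0 ∨ v (-e 0 2 + e 1 0 + e 1 1 + e 1 2 + e 2 2) = 1 := sq _ (by rw [← hm _ _ rfl, idm41])
  have comm0 : (e 2 2) * (e 1 0 + e 1 1) = (e 1 0 + e 1 1) * (e 2 2) := by simp only [mul_add, add_mul, mul_sub, sub_mul, neg_mul, mul_neg, neg_neg, emul]; try simp; try abel
  have hs0 : (e 2 2) + (e 1 0 + e 1 1) = (e 1 0 + e 1 1 + e 2 2) := by abel
  have f0 : v (e 1 0 + e 1 1 + e 2 2) = v (e 2 2) + v (e 1 0 + e 1 1) := by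
    have h' := hadd _ _ comm0
    rw [hs0] at h'
    exact h'
  have cab1 : (e 2 1 + e 2 2) * (e 0 0) = (0 : M) := by simp only [mul_add, add_mul, mul_sub, sub_mul, neg_mul, mul_neg, neg_neg, emul]; try simp; try abel
  have cba1 : (e 0 0) * (e 2 1 + e 2 2) = (0 : M) := by simp only [mul_add, add_mul, mul_sub, sub_mul, neg_mul, mul_neg, neg_neg, emul]; try simp; try abel
  have f1 : v (0 : M) = v (e 2 1 + e 2 2) * v (e 0 0) := by
    have h' := hm _ _ (cab1.trans cba1.symm)
    rw [cab1] at h'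
    exact h'
  have comm2 : (e 2 0 + e 2 2) * (e 1 1) = (e 1 1) * (e 2 0 + e 2 2) := by simp only [mul_add, add_mul, mul_sub, sub_mul, neg_mul, mul_neg, neg_neg, emul]; try simp; try abel
  have hs2 : (e 2 0 + e 2 2) + (e 1 1) = (e 1 1 + e 2 0 + e 2 2) := by abel
  have f2 : v (e 1 1 + e 2 0 + e 2 2) = v (e 2 0 + e 2 2) + v (e 1 1) := by
    have h' := hadd _ _ comm2
    rw [hs2] at h'
    exact h'
  have cab3 : (e 1 2 + e 2 2) * (e 0 0) = (0 : M) := by simp only [mul_add, add_mul, mul_sub, sub_mul, neg_mul, mul_neg, neg_neg, emul]; try simp; try abel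
  have cba3 : (e 0 0) * (e 1 2 + e 2 2) = (0 : M) := by simp only [mul_add, add_mul, mul_sub, sub_mul, neg_mul, mul_neg, neg_neg, emul]; try simp; try abel
  have f3 : v (0 : M) = v (e 1 2 + e 2 2) * v (e 0 0) := by
    have h' := hm _ _ (cab3.trans cba3.symm)
    rw [cab3] at h'
    exact h'
  have comm4 : (e 1 2 + e 2 2) * (e 0 0) = (e 0 0) * (e 1 2 + e 2 2) := by simp only [mul_add, add_mul, mul_sub, sub_mul, neg_mul, mul_neg, neg_neg, emul]; try simp; try abel
  have hs4 : (e 1 2 + e 2 2) + (e 0 0) = (e 0 0 + e 1 2 + e 2 2) := by abel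
  have f4 : v (e 0 0 + e 1 2 + e 2 2) = v (e 1 2 + e 2 2) + v (e 0 0) := by
    have h' := hadd _ _ comm4
    rw [hs4] at h'
    exact h'
  have cab5 : (e 1 1 - e 1 2) * (e 0 0) = (0 : M) := by simp only [mul_add, add_mul, mul_sub, sub_mul, neg_mul, mul_neg, neg_neg, emul]; try simp; try abel
  have cba5 : (e 0 0) * (e 1 1 - e 1 2) = (0 : M) := by simp only [mul_add, add_mul, mul_sub, sub_mul, neg_mul, mul_neg, neg_neg, emul]; try simp; try abel
  have f5 : v (0 : M) = v (e 1 1 - e 1 2) * v (e 0 0) := by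
    have h' := hm _ _ (cab5.trans cba5.symm)
    rw [cab5] at h'
    exact h'
  have comm6 : (e 1 1 - e 1 2) * (e 0 0) = (e 0 0) * (e 1 1 - e 1 2) := by simp only [mul_add, add_mul, mul_sub, sub_mul, neg_mul, mul_neg, neg_neg, emul]; try simp; try abel
  have hs6 : (e 1 1 - e 1 2) + (e 0 0) = (e 0 0 + e 1 1 - e 1 2) := by abel
  have f6 : v (e 0 0 + e 1 1 - e 1 2) = v (e 1 1 - e 1 2) + v (e 0 0) := by
    have h' := hadd _ _ comm6
    rw [hs6] at h'
    exact h'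
  have comm7 : (e 1 1) * (e 0 2 + e 2 2) = (e 0 2 + e 2 2) * (e 1 1) := by simp only [mul_add, add_mul, mul_sub, sub_mul, neg_mul, mul_neg, neg_neg, emul]; try simp; try abel
  have hs7 : (e 1 1) + (e 0 2 + e 2 2) = (e 0 2 + e 1 1 + e 2 2) := by abel
  have f7 : v (e 0 2 + e 1 1 + e 2 2) = v (e 1 1) + v (e 0 2 + e 2 2) := by
    have h' := hadd _ _ comm7
    rw [hs7] at h'
    exact h'
  have cab8 : (e 1 1 + e 2 1) * (e 0 0) = (0 : M) := by simp only [mul_add, add_mul, mul_sub, sub_mul, neg_mul, mul_neg, neg_neg, emul]; try simp; try abel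
  have cba8 : (e 0 0) * (e 1 1 + e 2 1) = (0 : M) := by simp only [mul_add, add_mul, mul_sub, sub_mul, neg_mul, mul_neg, neg_neg, emul]; try simp; try abel
  have f8 : v (0 : M) = v (e 1 1 + e 2 1) * v (e 0 0) := by
    have h' := hm _ _ (cab8.trans cba8.symm)
    rw [cab8] at h'
    exact h'
  have comm9 : (e 1 1 + e 2 1) * (e 0 0) = (e 0 0) * (e 1 1 + e 2 1) := by simp only [mul_add, add_mul, mul_sub, sub_mul, neg_mul, mul_neg, neg_neg, emul]; try simp; try abel
  have hs9 : (e 1 1 + e 2 1) + (e 0 0) = (e 0 0 + e 1 1 + e 2 1) := by abel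
  have f9 : v (e 0 0 + e 1 1 + e 2 1) = v (e 1 1 + e 2 1) + v (e 0 0) := by
    have h' := hadd _ _ comm9
    rw [hs9] at h'
    exact h'
  have cab10 : (-e 0 1 + e 1 1 - e 2 1) * (e 0 1 + e 0 2 + e 2 1 + e 2 2) = (0 : M) := by simp only [mul_add, add_mul, mul_sub, sub_mul, neg_mul, mul_neg, neg_neg, emul]; try simp; try abel
  have cba10 : (e 0 1 + e 0 2 + e 2 1 + e 2 2) * (-e 0 1 + e 1 1 - e 2 1) = (0 : M) := by simp only [mul_add, add_mul, mul_sub, sub_mul, neg_mul, mul_neg, neg_neg, emul]; try simp; try abel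
  have f10 : v (0 : M) = v (-e 0 1 + e 1 1 - e 2 1) * v (e 0 1 + e 0 2 + e 2 1 + e 2 2) := by
    have h' := hm _ _ (cab10.trans cba10.symm)
    rw [cab10] at h'
    exact h'
  have comm11 : (-e 0 1 + e 1 1 - e 2 1) * (e 0 1 + e 0 2 + e 2 1 + e 2 2) = (e 0 1 + e 0 2 + e 2 1 + e 2 2) * (-e 0 1 + e 1 1 - e 2 1) := by simp only [mul_add, add_mul, mul_sub, sub_mul, neg_mul, mul_neg, neg_neg, emul]; try simp; try abel
  have hs11 : (-e 0 1 + e 1 1 - e 2 1) + (e 0 1 + e 0 2 + e 2 1 + e 2 2) = (e 0 2 + e 1 1 + e 2 2) := by abel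
  have f11 : v (e 0 2 + e 1 1 + e 2 2) = v (-e 0 1 + e 1 1 - e 2 1) + v (e 0 1 + e 0 2 + e 2 1 + e 2 2) := by
    have h' := hadd _ _ comm11
    rw [hs11] at h'
    exact h'
  have comm12 : (-e 0 1 + e 1 1 - e 2 1) * (e 0 0 + e 0 1 + e 2 1 + e 2 2) = (e 0 0 + e 0 1 + e 2 1 + e 2 2) * (-e 0 1 + e 1 1 - e 2 1) := by simp only [mul_add, add_mul, mul_sub, sub_mul, neg_mul, mul_neg, neg_neg, emul]; try simp; try abel
  have hs12 : (-e 0 1 + e 1 1 - e 2 1) + (e 0 0 + e 0 1 + e 2 1 + e 2 2) = (e 0 0 + e 1 1 + e 2 2) := by abel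
  have f12 : v (e 0 0 + e 1 1 + e 2 2) = v (-e 0 1 + e 1 1 - e 2 1) + v (e 0 0 + e 0 1 + e 2 1 + e 2 2) := by
    have h' := hadd _ _ comm12
    rw [hs12] at h'
    exact h'
  have cab13 : (-e 0 1 + e 1 1 + e 2 2) * (e 0 0 + e 0 2 + e 1 1 - e 1 2) = (-e 0 1 + e 0 2 + e 1 1 - e 1 2) := by simp only [mul_add, add_mul, mul_sub, sub_mul, neg_mul, mul_neg, neg_neg, emul]; try simp; try abel
  have cba13 : (e 0 0 + e 0 2 + e 1 1 - e 1 2) * (-e 0 1 + e 1 1 + e 2 2) = (-e 0 1 + e 0 2 + e 1 1 - e 1 2) := by simp only [mul_add, add_mul, mul_sub, sub_mul, neg_mul, mul_neg, neg_neg, emul]; try simp; try abel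
  have f13 : v (-e 0 1 + e 0 2 + e 1 1 - e 1 2) = v (-e 0 1 + e 1 1 + e 2 2) * v (e 0 0 + e 0 2 + e 1 1 - e 1 2) := by
    have h' := hm _ _ (cab13.trans cba13.symm)
    rw [cab13] at h'
    exact h'
  have cab14 : (-e 0 1 + e 1 1 + e 2 2) * (e 0 0 + e 0 1 + e 2 1 + e 2 2) = (e 2 1 + e 2 2) := by simp only [mul_add, add_mul, mul_sub, sub_mul, neg_mul, mul_neg, neg_neg, emul]; try simp; try abel
  have cba14 : (e 0 0 + e 0 1 + e 2 1 + e 2 2) * (-e 0 1 + e 1 1 + e 2 2) = (e 2 1 + e 2 2) := by simp only [mul_add, add_mul, mul_sub, sub_mul, neg_mul, mul_neg, neg_neg, emul]; try simp; try abel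
  have f14 : v (e 2 1 + e 2 2) = v (-e 0 1 + e 1 1 + e 2 2) * v (e 0 0 + e 0 1 + e 2 1 + e 2 2) := by
    have h' := hm _ _ (cab14.trans cba14.symm)
    rw [cab14] at h'
    exact h'
  have cab15 : (-e 0 1 + e 1 1 + e 2 1) * (e 0 1 - e 0 2 - e 2 1 + e 2 2) = (0 : M) := by simp only [mul_add, add_mul, mul_sub, sub_mul, neg_mul, mul_neg, neg_neg, emul]; try simp; try abel
  have cba15 : (e 0 1 - e 0 2 - e 2 1 + e 2 2) * (-e 0 1 + e 1 1 + e 2 1) = (0 : M) := by simp only [mul_add, add_mul, mul_sub, sub_mul, neg_mul, mul_neg, neg_neg, emul]; try simp; try abel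
  have f15 : v (0 : M) = v (-e 0 1 + e 1 1 + e 2 1) * v (e 0 1 - e 0 2 - e 2 1 + e 2 2) := by
    have h' := hm _ _ (cab15.trans cba15.symm)
    rw [cab15] at h'
    exact h'
  have comm16 : (-e 0 1 + e 1 1 + e 2 1) * (e 0 1 - e 0 2 - e 2 1 + e 2 2) = (e 0 1 - e 0 2 - e 2 1 + e 2 2) * (-e 0 1 + e 1 1 + e 2 1) := by simp only [mul_add, add_mul, mul_sub, sub_mul, neg_mul, mul_neg, neg_neg, emul]; try simp; try abel
  have hs16 : (-e 0 1 + e 1 1 + e 2 1) + (e 0 1 - e 0 2 - e 2 1 + e 2 2) = (-e 0 2 + e 1 1 + e 2 2) := by abel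
  have f16 : v (-e 0 2 + e 1 1 + e 2 2) = v (-e 0 1 + e 1 1 + e 2 1) + v (e 0 1 - e 0 2 - e 2 1 + e 2 2) := by
    have h' := hadd _ _ comm16
    rw [hs16] at h'
    exact h'
  have comm17 : (-e 0 1 + e 1 1 + e 2 1) * (e 0 0 + e 0 1 - e 2 0 - e 2 1) = (e 0 0 + e 0 1 - e 2 0 - e 2 1) * (-e 0 1 + e 1 1 + e 2 1) := by simp only [mul_add, add_mul, mul_sub, sub_mul, neg_mul, mul_neg, neg_neg, emul]; try simp; try abel
  have hs17 : (-e 0 1 + e 1 1 + e 2 1) + (e 0 0 + e 0 1 - e 2 0 - e 2 1) = (e 0 0 + e 1 1 - e 2 0) := by abel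
  have f17 : v (e 0 0 + e 1 1 - e 2 0) = v (-e 0 1 + e 1 1 + e 2 1) + v (e 0 0 + e 0 1 - e 2 0 - e 2 1) := by
    have h' := hadd _ _ comm17
    rw [hs17] at h'
    exact h'
  have comm18 : (-e 0 1 + e 1 1 + e 2 1) * (e 0 0 + e 0 1 - e 2 1 + e 2 2) = (e 0 0 + e 0 1 - e 2 1 + e 2 2) * (-e 0 1 + e 1 1 + e 2 1) := by simp only [mul_add, add_mul, mul_sub, sub_mul, neg_mul, mul_neg, neg_neg, emul]; try simp; try abel
  have hs18 : (-e 0 1 + e 1 1 + e 2 1) + (e 0 0 + e 0 1 - e 2 1 + e 2 2) = (e 0 0 + e 1 1 + e 2 2) := by abel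
  have f18 : v (e 0 0 + e 1 1 + e 2 2) = v (-e 0 1 + e 1 1 + e 2 1) + v (e 0 0 + e 0 1 - e 2 1 + e 2 2) := by
    have h' := hadd _ _ comm18
    rw [hs18] at h'
    exact h'
  have comm19 : (-e 0 1 + e 0 2 + e 1 1 - e 1 2) * (-e 0 2 + e 1 2 + e 2 2) = (-e 0 2 + e 1 2 + e 2 2) * (-e 0 1 + e 0 2 + e 1 1 - e 1 2) := by simp only [mul_add, add_mul, mul_sub, sub_mul, neg_mul, mul_neg, neg_neg, emul]; try simp; try abel
  have hs19 : (-e 0 1 + e 0 2 + e 1 1 - e 1 2) + (-e 0 2 + e 1 2 + e 2 2) = (-e 0 1 + e 1 1 + e 2 2) := by abel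
  have f19 : v (-e 0 1 + e 1 1 + e 2 2) = v (-e 0 1 + e 0 2 + e 1 1 - e 1 2) + v (-e 0 2 + e 1 2 + e 2 2) := by
    have h' := hadd _ _ comm19
    rw [hs19] at h'
    exact h'
  have comm20 : (-e 0 1 + e 0 2 + e 1 1 - e 1 2) * (e 0 0 + e 0 1 - e 0 2) = (e 0 0 + e 0 1 - e 0 2) * (-e 0 1 + e 0 2 + e 1 1 - e 1 2) := by simp only [mul_add, add_mul, mul_sub, sub_mul, neg_mul, mul_neg, neg_neg, emul]; try simp; try abel
  have hs20 : (-e 0 1 + e 0 2 + e 1 1 - e 1 2) + (e 0 0 + e 0 1 - e 0 2) = (e 0 0 + e 1 1 - e 1 2) := by abel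
  have f20 : v (e 0 0 + e 1 1 - e 1 2) = v (-e 0 1 + e 0 2 + e 1 1 - e 1 2) + v (e 0 0 + e 0 1 - e 0 2) := by
    have h' := hadd _ _ comm20
    rw [hs20] at h'
    exact h'
  have comm21 : (-e 0 1 + e 0 2 + e 1 1 + e 2 2) * (e 0 0 + e 0 1 - e 0 2) = (e 0 0 + e 0 1 - e 0 2) * (-e 0 1 + e 0 2 + e 1 1 + e 2 2) := by simp only [mul_add, add_mul, mul_sub, sub_mul, neg_mul, mul_neg, neg_neg, emul]; try simp; try abel
  have hs21 : (-e 0 1 + e 0 2 + e 1 1 + e 2 2) + (e 0 0 + e 0 1 - e 0 2) = (e 0 0 + e 1 1 + e 2 2) := by abel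
  have f21 : v (e 0 0 + e 1 1 + e 2 2) = v (-e 0 1 + e 0 2 + e 1 1 + e 2 2) + v (e 0 0 + e 0 1 - e 0 2) := by
    have h' := hadd _ _ comm21
    rw [hs21] at h'
    exact h'
  have cab22 : (-e 0 1 + e 0 2 + e 1 1 + e 2 2) * (e 0 0 + e 0 1 + e 2 2) = (e 0 2 + e 2 2) := by simp only [mul_add, add_mul, mul_sub, sub_mul, neg_mul, mul_neg, neg_neg, emul]; try simp; try abel
  have cba22 : (e 0 0 + e 0 1 + e 2 2) * (-e 0 1 + e 0 2 + e 1 1 + e 2 2) = (e 0 2 + e 2 2) := by simp only [mul_add, add_mul, mul_sub, sub_mul, neg_mul, mul_neg, neg_neg, emul]; try simp; try abel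
  have f22 : v (e 0 2 + e 2 2) = v (-e 0 1 + e 0 2 + e 1 1 + e 2 2) * v (e 0 0 + e 0 1 + e 2 2) := by
    have h' := hm _ _ (cab22.trans cba22.symm)
    rw [cab22] at h'
    exact h'
  have comm23 : (-e 0 2 + e 1 2 + e 2 2) * (e 0 0 + e 0 2 + e 1 1 - e 1 2) = (e 0 0 + e 0 2 + e 1 1 - e 1 2) * (-e 0 2 + e 1 2 + e 2 2) := by simp only [mul_add, add_mul, mul_sub, sub_mul, neg_mul, mul_neg, neg_neg, emul]; try simp; try abel
  have hs23 : (-e 0 2 + e 1 2 + e 2 2) + (e 0 0 + e 0 2 + e 1 1 - e 1 2) = (e 0 0 + e 1 1 + e 2 2) := by abel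
  have f23 : v (e 0 0 + e 1 1 + e 2 2) = v (-e 0 2 + e 1 2 + e 2 2) + v (e 0 0 + e 0 2 + e 1 1 - e 1 2) := by
    have h' := hadd _ _ comm23
    rw [hs23] at h'
    exact h'
  have cab24 : (-e 0 2 + e 1 1 + e 2 2) * (e 0 0 + e 0 2 + e 1 1 - e 1 2) = (e 1 1 - e 1 2) := by simp only [mul_add, add_mul, mul_sub, sub_mul, neg_mul, mul_neg, neg_neg, emul]; try simp; try abel
  have cba24 : (e 0 0 + e 0 2 + e 1 1 - e 1 2) * (-e 0 2 + e 1 1 + e 2 2) = (e 1 1 - e 1 2) := by simp only [mul_add, add_mul, mul_sub, sub_mul, neg_mul, mul_neg, neg_neg, emul]; try simp; try abel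
  have f24 : v (e 1 1 - e 1 2) = v (-e 0 2 + e 1 1 + e 2 2) * v (e 0 0 + e 0 2 + e 1 1 - e 1 2) := by
    have h' := hm _ _ (cab24.trans cba24.symm)
    rw [cab24] at h'
    exact h'
  have cab25 : (-e 1 0 + e 1 1 - e 1 2) * (e 1 0 + e 1 2 + e 2 0 + e 2 2) = (0 : M) := by simp only [mul_add, add_mul, mul_sub, sub_mul, neg_mul, mul_neg, neg_neg, emul]; try simp; try abel
  have cba25 : (e 1 0 + e 1 2 + e 2 0 + e 2 2) * (-e 1 0 + e 1 1 - e 1 2) = (0 : M) := by simp only [mul_add, add_mul, mul_sub, sub_mul, neg_mul, mul_neg, neg_neg, emul]; try simp; try abel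
  have f25 : v (0 : M) = v (-e 1 0 + e 1 1 - e 1 2) * v (e 1 0 + e 1 2 + e 2 0 + e 2 2) := by
    have h' := hm _ _ (cab25.trans cba25.symm)
    rw [cab25] at h'
    exact h'
  have comm26 : (-e 1 0 + e 1 1 - e 1 2) * (e 1 0 + e 1 2 + e 2 0 + e 2 2) = (e 1 0 + e 1 2 + e 2 0 + e 2 2) * (-e 1 0 + e 1 1 - e 1 2) := by simp only [mul_add, add_mul, mul_sub, sub_mul, neg_mul, mul_neg, neg_neg, emul]; try simp; try abel
  have hs26 : (-e 1 0 + e 1 1 - e 1 2) + (e 1 0 + e 1 2 + e 2 0 + e 2 2) = (e 1 1 + e 2 0 + e 2 2) := by abel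
  have f26 : v (e 1 1 + e 2 0 + e 2 2) = v (-e 1 0 + e 1 1 - e 1 2) + v (e 1 0 + e 1 2 + e 2 0 + e 2 2) := by
    have h' := hadd _ _ comm26
    rw [hs26] at h'
    exact h'
  have cab27 : (e 1 0 + e 1 1 + e 2 2) * (e 0 0 + e 1 1 + e 2 0 + e 2 1) = (e 1 0 + e 1 1 + e 2 0 + e 2 1) := by simp only [mul_add, add_mul, mul_sub, sub_mul, neg_mul, mul_neg, neg_neg, emul]; try simp; try abel
  have cba27 : (e 0 0 + e 1 1 + e 2 0 + e 2 1) * (e 1 0 + e 1 1 + e 2 2) = (e 1 0 + e 1 1 + e 2 0 + e 2 1) := by simp only [mul_add, add_mul, mul_sub, sub_mul, neg_mul, mul_neg, neg_neg, emul]; try simp; try abel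
  have f27 : v (e 1 0 + e 1 1 + e 2 0 + e 2 1) = v (e 1 0 + e 1 1 + e 2 2) * v (e 0 0 + e 1 1 + e 2 0 + e 2 1) := by
    have h' := hm _ _ (cab27.trans cba27.symm)
    rw [cab27] at h'
    exact h'
  have cab28 : (e 1 0 + e 1 1 + e 2 0 + e 2 2) * (e 0 0 - e 1 0 + e 2 2) = (e 2 0 + e 2 2) := by simp only [mul_add, add_mul, mul_sub, sub_mul, neg_mul, mul_neg, neg_neg, emul]; try simp; try abel
  have cba28 : (e 0 0 - e 1 0 + e 2 2) * (e 1 0 + e 1 1 + e 2 0 + e 2 2) = (e 2 0 + e 2 2) := by simp only [mul_add, add_mul, mul_sub, sub_mul, neg_mul, mul_neg, neg_neg, emul]; try simp; try abel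
  have f28 : v (e 2 0 + e 2 2) = v (e 1 0 + e 1 1 + e 2 0 + e 2 2) * v (e 0 0 - e 1 0 + e 2 2) := by
    have h' := hm _ _ (cab28.trans cba28.symm)
    rw [cab28] at h'
    exact h'
  have cab29 : (e 1 0 + e 1 1 + e 2 0 + e 2 2) * (e 0 0 + e 1 2 + e 2 2) = (e 1 0 + e 1 2 + e 2 0 + e 2 2) := by simp only [mul_add, add_mul, mul_sub, sub_mul, neg_mul, mul_neg, neg_neg, emul]; try simp; try abel
  have cba29 : (e 0 0 + e 1 2 + e 2 2) * (e 1 0 + e 1 1 + e 2 0 + e 2 2) = (e 1 0 + e 1 2 + e 2 0 + e 2 2) := by simp only [mul_add, add_mul, mul_sub, sub_mul, neg_mul, mul_neg, neg_neg, emul]; try simp; try abel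
  have f29 : v (e 1 0 + e 1 2 + e 2 0 + e 2 2) = v (e 1 0 + e 1 1 + e 2 0 + e 2 2) * v (e 0 0 + e 1 2 + e 2 2) := by
    have h' := hm _ _ (cab29.trans cba29.symm)
    rw [cab29] at h'
    exact h'
  have cab30 : (e 1 0 + e 1 1 + e 2 0 + e 2 2) * (e 0 0 + e 1 1 - e 2 0) = (e 1 0 + e 1 1) := by simp only [mul_add, add_mul, mul_sub, sub_mul, neg_mul, mul_neg, neg_neg, emul]; try simp; try abel
  have cba30 : (e 0 0 + e 1 1 - e 2 0) * (e 1 0 + e 1 1 + e 2 0 + e 2 2) = (e 1 0 + e 1 1) := by simp only [mul_add, add_mul, mul_sub, sub_mul, neg_mul, mul_neg, neg_neg, emul]; try simp; try abel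
  have f30 : v (e 1 0 + e 1 1) = v (e 1 0 + e 1 1 + e 2 0 + e 2 2) * v (e 0 0 + e 1 1 - e 2 0) := by
    have h' := hm _ _ (cab30.trans cba30.symm)
    rw [cab30] at h'
    exact h'
  have cab31 : (e 1 0 + e 1 1 + e 2 0 + e 2 2) * (e 0 0 + e 1 1 + e 2 1) = (e 1 0 + e 1 1 + e 2 0 + e 2 1) := by simp only [mul_add, add_mul, mul_sub, sub_mul, neg_mul, mul_neg, neg_neg, emul]; try simp; try abel
  have cba31 : (e 0 0 + e 1 1 + e 2 1) * (e 1 0 + e 1 1 + e 2 0 + e 2 2) = (e 1 0 + e 1 1 + e 2 0 + e 2 1) := by simp only [mul_add, add_mul, mul_sub, sub_mul, neg_mul, mul_neg, neg_neg, emul]; try simp; try abel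
  have f31 : v (e 1 0 + e 1 1 + e 2 0 + e 2 1) = v (e 1 0 + e 1 1 + e 2 0 + e 2 2) * v (e 0 0 + e 1 1 + e 2 1) := by
    have h' := hm _ _ (cab31.trans cba31.symm)
    rw [cab31] at h'
    exact h'
  have comm32 : (-e 0 1 + e 1 1 + e 2 0 + e 2 1 + e 2 2) * (e 0 0 + e 0 1 - e 2 0 - e 2 1) = (e 0 0 + e 0 1 - e 2 0 - e 2 1) * (-e 0 1 + e 1 1 + e 2 0 + e 2 1 + e 2 2) := by simp only [mul_add, add_mul, mul_sub, sub_mul, neg_mul, mul_neg, neg_neg, emul]; try simp; try abel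
  have hs32 : (-e 0 1 + e 1 1 + e 2 0 + e 2 1 + e 2 2) + (e 0 0 + e 0 1 - e 2 0 - e 2 1) = (e 0 0 + e 1 1 + e 2 2) := by abel
  have f32 : v (e 0 0 + e 1 1 + e 2 2) = v (-e 0 1 + e 1 1 + e 2 0 + e 2 1 + e 2 2) + v (e 0 0 + e 0 1 - e 2 0 - e 2 1) := by
    have h' := hadd _ _ comm32
    rw [hs32] at h'
    exact h'
  have cab33 : (-e 0 1 + e 1 1 + e 2 0 + e 2 1 + e 2 2) * (e 0 0 + e 0 1 - e 2 1 + e 2 2) = (e 2 0 + e 2 2) := by simp only [mul_add, add_mul, mul_sub, sub_mul, neg_mul, mul_neg, neg_neg, emul]; try simp; try abel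
  have cba33 : (e 0 0 + e 0 1 - e 2 1 + e 2 2) * (-e 0 1 + e 1 1 + e 2 0 + e 2 1 + e 2 2) = (e 2 0 + e 2 2) := by simp only [mul_add, add_mul, mul_sub, sub_mul, neg_mul, mul_neg, neg_neg, emul]; try simp; try abel
  have f33 : v (e 2 0 + e 2 2) = v (-e 0 1 + e 1 1 + e 2 0 + e 2 1 + e 2 2) * v (e 0 0 + e 0 1 - e 2 1 + e 2 2) := by
    have h' := hm _ _ (cab33.trans cba33.symm)
    rw [cab33] at h'
    exact h'
  have cab34 : (-e 0 2 + e 1 0 + e 1 1 + e 1 2 + e 2 2) * (e 0 0 + e 0 2 + e 1 1 - e 1 2) = (e 1 0 + e 1 1) := by simp only [mul_add, add_mul, mul_sub, sub_mul, neg_mul, mul_neg, neg_neg, emul]; try simp; try abel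
  have cba34 : (e 0 0 + e 0 2 + e 1 1 - e 1 2) * (-e 0 2 + e 1 0 + e 1 1 + e 1 2 + e 2 2) = (e 1 0 + e 1 1) := by simp only [mul_add, add_mul, mul_sub, sub_mul, neg_mul, mul_neg, neg_neg, emul]; try simp; try abel
  have f34 : v (e 1 0 + e 1 1) = v (-e 0 2 + e 1 0 + e 1 1 + e 1 2 + e 2 2) * v (e 0 0 + e 0 2 + e 1 1 - e 1 2) := by
    have h' := hm _ _ (cab34.trans cba34.symm)
    rw [cab34] at h'
    exact h'
  have cab35 : (-e 0 2 + e 1 0 + e 1 1 + e 1 2 + e 2 2) * (e 0 0 + e 0 1 - e 2 0 - e 2 1) = (e 0 0 + e 0 1 - e 2 0 - e 2 1) := by simp only [mul_add, add_mul, mul_sub, sub_mul, neg_mul, mul_neg, neg_neg, emul]; try simp; try abel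
  have cba35 : (e 0 0 + e 0 1 - e 2 0 - e 2 1) * (-e 0 2 + e 1 0 + e 1 1 + e 1 2 + e 2 2) = (e 0 0 + e 0 1 - e 2 0 - e 2 1) := by simp only [mul_add, add_mul, mul_sub, sub_mul, neg_mul, mul_neg, neg_neg, emul]; try simp; try abel
  have f35 : v (e 0 0 + e 0 1 - e 2 0 - e 2 1) = v (-e 0 2 + e 1 0 + e 1 1 + e 1 2 + e 2 2) * v (e 0 0 + e 0 1 - e 2 0 - e 2 1) := by
    have h' := hm _ _ (cab35.trans cba35.symm)
    rw [cab35] at h'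
    exact h'
  exact stage1 K (v (e 2 2)) (v (e 1 0 + e 1 1)) (v (e 1 0 + e 1 1 + e 2 2)) (v (e 2 1 + e 2 2)) (v (e 0 0)) (v (0 : M)) (v (e 2 0 + e 2 2)) (v (e 1 1)) (v (e 1 1 + e 2 0 + e 2 2)) (v (e 1 2 + e 2 2)) (v (e 0 0 + e 1 2 + e 2 2)) (v (e 1 1 - e 1 2)) (v (e 0 0 + e 1 1 - e 1 2)) (v (e 0 2 + e 2 2)) (v (e 0 2 + e 1 1 + e 2 2)) (v (e 1 1 + e 2 1)) (v (e 0 0 + e 1 1 + e 2 1)) (v (-e 0 1 + e 1 1 - e 2 1)) (v (e 0 1 + e 0 2 + e 2 1 + e 2 2)) (v (e 0 0 + e 0 1 + e 2 1 + e 2 2)) (v (e 0 0 + e 1 1 + e 2 2)) (v (-e 0 1 + e 1 1 + e 2 2)) (v (e 0 0 + e 0 2 + e 1 1 - e 1 2)) (v (-e 0 1 + e 0 2 + e 1 1 - e 1 2)) (v (-e 0 1 + e 1 1 + e 2 1)) (v (e 0 1 - e 0 2 - e 2 1 + e 2 2)) (v (-e 0 2 + e 1 1 + e 2 2)) (v (e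 0 0 + e 0 1 - e 2 0 - e 2 1)) (v (e 0 0 + e 1 1 - e 2 0)) (v (e 0 0 + e 0 1 - e 2 1 + e 2 2)) (v (-e 0 2 + e 1 2 + e 2 2)) (v (e 0 0 + e 0 1 - e 0 2)) (v (-e 0 1 + e 0 2 + e 1 1 + e 2 2)) (v (e 0 0 + e 0 1 + e 2 2)) (v (-e 1 0 + e 1 1 - e 1 2)) (v (e 1 0 + e 1 2 + e 2 0 + e 2 2)) (v (e 0 0 + e 1 1 + e 2 0 + e 2 1)) (v (e 1 0 + e 1 1 + e 2 0 + e 2 1)) (v (e 1 0 + e 1 1 + e 2 0 + e 2 2)) (v (e 0 0 - e 1 0 + e 2 2)) (v (-e 0 1 + e 1 1 + e 2 0 + e 2 1 + e 2 2)) (v (-e 0 2 + e 1 0 + e 1 1 + e 1 2 + e 2 2)) h22 d1 d2 d3 h00 hz d6 h11 d8 d9 d10 d11 d12 d13 d14 d15 d16 d17 d18 d19 hI d21 d22 d23 d24 d25 d26 d27 d28 d29 d30 d31 d32 d33 d34 d35 d36 d37 d38 d39 d40 d41 f0 f1 f2 f3 f4 f5 f6 f7 f8 f9 f10 f11 f12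 f13 f14 f15 f16 f17 f18 f19 f20 f21 f22 f23 f24 f25 f26 f27 f28 f29 f30 f31 f32 f33 f34 f35

section MatrixPart
variable {R : Type} [Ring R] {n : ℕ}

theorem matrixCon (R : Type) [Ring R] (n : ℕ) (hn : 3 ≤ n) (K : Type) [CommRing K] [IsDomain K]
    (v : Matrix (Fin n) (Fin n) R → K)
    (hm : ∀ a b : Matrix (Fin n) (Fin n) R, a*b = b*a → v (a*b) = v a * v b)
    (hadd : ∀ a b : Matrix (Fin n) (Fin n) R, a*b = b*a → v (a+b) = v a + v b)
    (hone : v 1 = 1) (hzero : v 0 = 0)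
    (hsum : ∀ f : Fin n → Matrix (Fin n) (Fin n) R,
      (∀ i j, f i * f j = f j * f i) → v (∑ i, f i) = ∑ i, v (f i)) : False := by
  classical
  set Ed : Fin n → Matrix (Fin n) (Fin n) R := fun i => Matrix.single i i (1:R) with hEd
  have hEd_same : ∀ i : Fin n, Ed i * Ed i = Ed i := by
    intro i
    rw [hEd]
    simp only [Matrix.single_mul_single_same, one_mul]
  have hEd_ne : ∀ i j : Fin n, i ≠ j → Ed i * Ed j = 0 := by
    intro i j hij
    rw [hEd]
    exact Matrix.single_mul_single_of_ne (c := 1) i i j hij 1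
  have hEd_comm : ∀ i j : Fin n, Ed i * Ed j = Ed j * Ed i := by
    intro i j
    by_cases hij : i = j
    · subst hij; rfl
    · rw [hEd_ne i j hij, hEd_ne j i (Ne.symm hij)]
  have honeM : (1 : Matrix (Fin n) (Fin n) R) = ∑ i, Ed i := by
    ext a b
    simp only [Matrix.sum_apply, hEd, Matrix.single, Matrix.one_apply, Matrix.of_apply]
    by_cases hab : a = b
    · subst hab
      rw [Finset.sum_eq_single a (fun c _ hca => if_neg (by rintro ⟨rfl, _⟩; exact hca rfl))
        (fun ha => absurd (Finset.mem_univ a) ha)]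
      simp
    · rw [if_neg hab, Finset.sum_eq_zero]
      intro c _
      rw [if_neg]
      rintro ⟨rfl, rfl⟩
      exact hab rfl
  have h1 : (1:K) = ∑ i, v (Ed i) := by
    rw [← hone, honeM]
    exact hsum Ed hEd_comm
  obtain ⟨i0, -, hi0⟩ := Finset.exists_ne_zero_of_sum_ne_zero
    (show ∑ i, v (Ed i) ≠ 0 by rw [← h1]; exact one_ne_zero)
  have hidem : ∀ i, v (Ed i) * v (Ed i) = v (Ed i) := by
    intro i
    have h2 := hm (Ed i) (Ed i) rfl
    rw [hEd_same] at h2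
    exact h2.symm
  have hi0' : v (Ed i0) = 1 := (sq01 _ (hidem i0)).resolve_left hi0
  have hzero' : ∀ l, l ≠ i0 → v (Ed l) = 0 := by
    intro l hl
    have h2 := hm (Ed i0) (Ed l) (hEd_comm _ _)
    rw [hEd_ne i0 l (Ne.symm hl), hzero, hi0', one_mul] at h2
    exact h2.symm
  have hcard : 1 < (Finset.univ.erase i0).card := by
    rw [Finset.card_erase_of_mem (Finset.mem_univ _), Finset.card_univ, Fintype.card_fin]
    omega
  obtain ⟨j, hj, k, hk, hjk⟩ := Finset.one_lt_card.mp hcard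
  have hji0 : j ≠ i0 := Finset.ne_of_mem_erase hj
  have hki0 : k ≠ i0 := Finset.ne_of_mem_erase hk
  set pk : Fin 3 → Fin n := ![i0, j, k] with hpkdef
  have hpk0 : pk 0 = i0 := rfl
  have hpk1 : pk 1 = j := rfl
  have hpk2 : pk 2 = k := rfl
  have hpk : Function.Injective pk := by
    intro a b hab
    match a, b with
    | 0, 0 => rfl
    | 1, 1 => rfl
    | 2, 2 => rfl
    | 0, 1 => rw [hpk0, hpk1] at hab; exact absurd hab.symm hji0
    | 1, 0 => rw [hpk0, hpk1] at hab; exact absurd hab hji0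
    | 0, 2 => rw [hpk0, hpk2] at hab; exact absurd hab.symm hki0
    | 2, 0 => rw [hpk0, hpk2] at hab; exact absurd hab hki0
    | 1, 2 => rw [hpk1, hpk2] at hab; exact absurd hab hjk
    | 2, 1 => rw [hpk1, hpk2] at hab; exact absurd hab.symm hjk
  set e : Fin 3 → Fin 3 → Matrix (Fin n) (Fin n) R :=
    fun a b => Matrix.single (pk a) (pk b) 1 with hedef
  have emul : ∀ a b c d : Fin 3, e a b * e c d = if b = c then e a d else 0 := by
    intro a b c d
    by_cases hbc : b = c
    · subst hbc
      rw [if_pos rfl]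
      simp only [hedef]
      simp only [Matrix.single_mul_single_same, one_mul]
    · rw [if_neg hbc]
      simp only [hedef]
      exact Matrix.single_mul_single_of_ne (c := 1) (pk a) (pk b) (pk c) (fun hc => hbc (hpk hc)) 1
  have he00 : e 0 0 = Ed i0 := by simp only [hedef, hEd, hpk0]
  have he11 : e 1 1 = Ed j := by simp only [hedef, hEd, hpk1]
  have he22 : e 2 2 = Ed k := by simp only [hedef, hEd, hpk2]
  refine blockCon _ K v hm hadd e emul ?_ ?_ ?_ ?_ hzero
  · rw [he00]; exact hi0'
  · rw [he11]; exact hzero' j hji0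
  · rw [he22]; exact hzero' k hki0
  · rw [he00, he11, he22]
    have c1 : Ed i0 * Ed j = Ed j * Ed i0 := hEd_comm _ _
    have c2 : (Ed i0 + Ed j) * Ed k = Ed k * (Ed i0 + Ed j) := by
      rw [add_mul, mul_add, hEd_comm i0 k, hEd_comm j k]
    have h3 := hadd _ _ c2
    rw [hadd _ _ c1] at h3
    rw [h3, hi0', hzero' j hji0, hzero' k hki0]
    ring

end MatrixPart

/-- For every ring `R` and every `n ≥ 3`, the colimit in `CommRingCat` of the diagram of
commutative subrings of `Mₙ(R)` is the zero ring. -/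
theorem colimit_commSubrings_matrix_subsingleton (R : Type) [Ring R] (n : ℕ) (hn : 3 ≤ n) :
    Subsingleton ↥(Limits.colimit (commSubringDiagram (Matrix (Fin n) (Fin n) R))) := by
  by_contra hs
  have hnt : Nontrivial ↥(Limits.colimit (commSubringDiagram (Matrix (Fin n) (Fin n) R))) :=
    not_subsingleton_iff_nontrivial.mp hs
  obtain ⟨mI, hmI⟩ := Ideal.exists_maximal ↥(Limits.colimit (commSubringDiagram (Matrix (Fin n) (Fin n) R)))
  haveI := hmI
  let ψ : (C : CommSubring (Matrix (Fin n) (Fin n) R)) → C.1 →+* (↥(Limits.colimit (commSubringDiagram (Matrix (Fin n) (Fin n) R))) ⧸ mI) := fun C =>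
    (Ideal.Quotient.mk mI).comp (Limits.colimit.ι (commSubringDiagram (Matrix (Fin n) (Fin n) R)) C).hom
  have hψ : ∀ (C D : CommSubring (Matrix (Fin n) (Fin n) R)) (h : C ≤ D) (a : Matrix (Fin n) (Fin n) R) (ha : a ∈ C.1),
      ψ D ⟨a, h ha⟩ = ψ C ⟨a, ha⟩ := by
    intro C D h a ha
    have w := Limits.colimit.w (commSubringDiagram (Matrix (Fin n) (Fin n) R)) (homOfLE h)
    have hw := ConcreteCategory.congr_hom w (⟨a, ha⟩ : C.1)
    erw [CategoryTheory.comp_apply] at hw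
    have hmap : ((commSubringDiagram (Matrix (Fin n) (Fin n) R)).map (homOfLE h)) (⟨a, ha⟩ : C.1)
        = (⟨a, h ha⟩ : D.1) := rfl
    rw [hmap] at hw
    simp only [ψ, RingHom.comp_apply]
    exact congrArg (Ideal.Quotient.mk mI) hw
  haveI : mI.IsPrime := hmI.isPrime
  exact matrixCon R n hn _ (vv _ ψ)
    (fun a b h => vv_mul ψ hψ a b h)
    (fun a b h => vv_add ψ hψ a b h)
    (vv_one ψ hψ) (vv_zero ψ hψ)
    (fun f hf => vv_sum ψ hψ Finset.univ f (fun i _ j _ => hf i j))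
end
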